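/- arXiv:2009.02726 — 8 statements merged into one kernel-verified Lean document; each statement's English description precedes it below -/
import Mathlib

section
/- Let p ≥ 2, κ ∈ [0,1] and γ ∈ [1/(p−1), 1], and let E(ξ) = (|ξ| + κ)^{γp − γ − 1} ξ. Then there is a constant C = C(p, γ) > 0 such that for all ξ, ζ ∈ ℝⁿ, |E(ξ) − E(ζ)|^{(1/γ) − 1} ≤ C (|ξ| + |ζ| + κ)^{(p−1)(1−γ)}. -/
open scoped ENNReal

/-- For `p ≥ 2`, `κ ∈ [0,1]`, `γ ∈ [1/(p-1), 1]` and
`E(ξ) = (|ξ| + κ)^(γp - γ - 1) ξ`, there is `C = C(p,γ) > 0` such that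
`|E(ξ) - E(ζ)|^((1/γ) - 1) ≤ C (|ξ| + |ζ| + κ)^((p-1)(1-γ))` for all `ξ, ζ ∈ ℝⁿ`. -/
theorem statement1 (p κ γ : ℝ) (hp : 2 ≤ p) (hκ : κ ∈ Set.Icc (0:ℝ) 1)
    (hγ : γ ∈ Set.Icc (1/(p-1)) 1)
    (E : ∀ n : ℕ, EuclideanSpace ℝ (Fin n) → EuclideanSpace ℝ (Fin n))
    (hE : ∀ (n : ℕ) (ξ : EuclideanSpace ℝ (Fin n)),
      E n ξ = ((‖ξ‖ + κ) ^ (γ * p - γ - 1)) • ξ) :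
    ∃ C : ℝ, 0 < C ∧ ∀ (n : ℕ) (ξ ζ : EuclideanSpace ℝ (Fin n)),
      ‖E n ξ - E n ζ‖ ^ (1/γ - 1) ≤ C * (‖ξ‖ + ‖ζ‖ + κ) ^ ((p - 1) * (1 - γ)) := by
  obtain ⟨hκ0, hκ1⟩ := hκ
  obtain ⟨hγl, hγu⟩ := hγ
  have hp1 : (0:ℝ) < p - 1 := by linarith
  have hγ0 : 0 < γ := lt_of_lt_of_le (by positivity) hγl
  have he : 0 ≤ 1/γ - 1 := by
    rw [sub_nonneg, le_div_iff₀ hγ0]; linarith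
  refine ⟨2 ^ (1/γ - 1), by positivity, ?_⟩
  intro n ξ ζ
  set a := γ * (p - 1) with ha
  have ha0 : 0 ≤ a := by positivity
  set S := ‖ξ‖ + ‖ζ‖ + κ with hS
  have hS0 : 0 ≤ S := by positivity
  have key : ∀ x : EuclideanSpace ℝ (Fin n), ‖E n x‖ ≤ (‖x‖ + κ) ^ a := by
    intro x
    have hbx : (0:ℝ) ≤ ‖x‖ + κ := by positivity
    rw [hE, norm_smul, Real.norm_eq_abs,
      abs_of_nonneg (Real.rpow_nonneg hbx _)]
    rcases eq_or_lt_of_le hbx with h | h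
    · have hx : ‖x‖ = 0 := by
        have := norm_nonneg x; nlinarith
      rw [hx, mul_zero]
      exact Real.rpow_nonneg (by positivity) _
    · calc (‖x‖ + κ) ^ (γ * p - γ - 1) * ‖x‖
          ≤ (‖x‖ + κ) ^ (γ * p - γ - 1) * (‖x‖ + κ) :=
            mul_le_mul_of_nonneg_left (by linarith)
              (Real.rpow_nonneg (le_of_lt h) _)
        _ = (‖x‖ + κ) ^ a := by
            rw [← Real.rpow_add_one (ne_of_gt h)]; ring_nf; rw [ha]; ring_nf
  have h1 : ‖E n ξ - E n ζ‖ ≤ 2 * S ^ a := by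
    calc ‖E n ξ - E n ζ‖ ≤ ‖E n ξ‖ + ‖E n ζ‖ := norm_sub_le _ _
      _ ≤ (‖ξ‖ + κ) ^ a + (‖ζ‖ + κ) ^ a := add_le_add (key ξ) (key ζ)
      _ ≤ S ^ a + S ^ a := add_le_add
          (Real.rpow_le_rpow (by positivity)
            (by simp only [hS]; linarith [norm_nonneg ζ]) ha0)
          (Real.rpow_le_rpow (by positivity)
            (by simp only [hS]; linarith [norm_nonneg ξ]) ha0)
      _ = 2 * S ^ a := by ring
  calc ‖E n ξ - E n ζ‖ ^ (1/γ - 1) ≤ (2 * S ^ a) ^ (1/γ - 1) :=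
        Real.rpow_le_rpow (norm_nonneg _) h1 he
    _ = 2 ^ (1/γ-1) * (S ^ a) ^ (1/γ-1) :=
        Real.mul_rpow (by norm_num) (Real.rpow_nonneg hS0 _)
    _ = 2 ^ (1/γ-1) * S ^ (a * (1/γ-1)) := by rw [← Real.rpow_mul hS0]
    _ = 2 ^ (1/γ-1) * S ^ ((p-1)*(1-γ)) := by
        rw [show a * (1/γ-1) = (p-1)*(1-γ) by
          rw [ha]; field_simp]
end

section
/- Let p ≥ 2, κ ∈ [0,1] and γ ∈ [1/(p−1), 1], and let E(ξ) = (|ξ| + κ)^{γp − γ − 1} ξ. Then there is a constant C = C(p, γ) > 0 such that for all ξ, ζ ∈ ℝⁿ, |E(ξ) − E(ζ)| ≤ C (|ξ| + |ζ| + κ)^{γp − γ − 1} |ξ − ζ|. -/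
/-- Key scalar inequality: for `0 ≤ y ≤ x` and `α ≥ 0`,
`(x^α - y^α) * y ≤ α * x^α * (x - y)`. -/
lemma key_rpow_ineq (α : ℝ) (hα : 0 ≤ α) {x y : ℝ} (hy : 0 ≤ y) (hxy : y ≤ x) :
    (x ^ α - y ^ α) * y ≤ α * x ^ α * (x - y) := by
  rcases eq_or_lt_of_le hy with h0 | hy0
  · rw [← h0]
    have hx : 0 ≤ x := le_trans hy hxy
    have hxa : 0 ≤ x ^ α := Real.rpow_nonneg hx α
    nlinarith [mul_nonneg (mul_nonneg hα hxa) hx]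
  · have hx0 : 0 < x := lt_of_lt_of_le hy0 hxy
    have hα1 : (0:ℝ) < α + 1 := by linarith
    -- weighted AM-GM: x^α * y ≤ (α/(α+1)) x^(α+1) + (1/(α+1)) y^(α+1)
    have hgm := Real.geom_mean_le_arith_mean2_weighted
      (w₁ := α / (α + 1)) (w₂ := 1 / (α + 1))
      (p₁ := x ^ (α + 1)) (p₂ := y ^ (α + 1))
      (by positivity) (by positivity)
      (Real.rpow_nonneg hx0.le _) (Real.rpow_nonneg hy0.le _)
      (by field_simp)
    have e1 : (x ^ (α + 1)) ^ (α / (α + 1)) = x ^ α := by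
      rw [← Real.rpow_mul hx0.le]
      congr 1
      field_simp
    have e2 : (y ^ (α + 1)) ^ (1 / (α + 1)) = y := by
      rw [← Real.rpow_mul hy0.le]
      rw [mul_one_div, div_self hα1.ne', Real.rpow_one]
    rw [e1, e2] at hgm
    have hx1 : x ^ (α + 1) = x ^ α * x := by
      rw [Real.rpow_add hx0, Real.rpow_one]
    have hy1 : y ^ (α + 1) = y ^ α * y := by
      rw [Real.rpow_add hy0, Real.rpow_one]
    rw [hx1, hy1] at hgm
    -- hgm : x^α * y ≤ α/(α+1) * (x^α * x) + 1/(α+1) * (y^α * y)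
    have hgm' : (α + 1) * (x ^ α * y) ≤ α * (x ^ α * x) + y ^ α * y := by
      have := mul_le_mul_of_nonneg_left hgm hα1.le
      field_simp at this
      linarith
    nlinarith [hgm']

/-- For `p ≥ 2`, `κ ∈ [0,1]`, `γ ∈ [1/(p-1), 1]` and
`E(ξ) = (|ξ| + κ)^(γp - γ - 1) ξ`, there is `C = C(p,γ) > 0` such that
`|E(ξ) - E(ζ)| ≤ C (|ξ| + |ζ| + κ)^(γp - γ - 1) |ξ - ζ|` for all `ξ, ζ ∈ ℝⁿ`. -/
theorem statement2 (p κ γ : ℝ) (hp : 2 ≤ p) (hκ : κ ∈ Set.Icc (0:ℝ) 1)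
    (hγ : γ ∈ Set.Icc (1/(p-1)) 1)
    (E : ∀ n : ℕ, EuclideanSpace ℝ (Fin n) → EuclideanSpace ℝ (Fin n))
    (hE : ∀ (n : ℕ) (ξ : EuclideanSpace ℝ (Fin n)),
      E n ξ = ((‖ξ‖ + κ) ^ (γ * p - γ - 1)) • ξ) :
    ∃ C : ℝ, 0 < C ∧ ∀ (n : ℕ) (ξ ζ : EuclideanSpace ℝ (Fin n)),
      ‖E n ξ - E n ζ‖ ≤ C * (‖ξ‖ + ‖ζ‖ + κ) ^ (γ * p - γ - 1) * ‖ξ - ζ‖ := by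
  obtain ⟨hκ0, hκ1⟩ := hκ
  obtain ⟨hγ1, hγ2⟩ := hγ
  set α := γ * p - γ - 1 with hαdef
  have hp1 : (0:ℝ) < p - 1 := by linarith
  have hα : 0 ≤ α := by
    rw [div_le_iff₀ hp1] at hγ1
    have : 1 ≤ γ * (p - 1) := by linarith
    nlinarith
  refine ⟨α + 1, by linarith, ?_⟩
  have main : ∀ n (ξ ζ : EuclideanSpace ℝ (Fin n)), ‖ζ‖ ≤ ‖ξ‖ →
      ‖E n ξ - E n ζ‖ ≤ (α + 1) * (‖ξ‖ + ‖ζ‖ + κ) ^ α * ‖ξ - ζ‖ := by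
    intro n ξ ζ hts
    rw [hE, hE]
    set s := ‖ξ‖ with hs'
    set t := ‖ζ‖ with ht'
    have hs : 0 ≤ s := norm_nonneg _
    have ht : 0 ≤ t := norm_nonneg _
    have hyx : t + κ ≤ s + κ := by linarith
    have hy0 : 0 ≤ t + κ := by linarith
    have h1 : ((s + κ) ^ α) • ξ - ((t + κ) ^ α) • ζ
        = ((s + κ) ^ α) • (ξ - ζ) + ((s + κ) ^ α - (t + κ) ^ α) • ζ := by
      rw [smul_sub, sub_smul]; abel
    rw [h1]
    have hD : 0 ≤ (s + κ) ^ α - (t + κ) ^ α :=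
      sub_nonneg.mpr (Real.rpow_le_rpow hy0 hyx hα)
    have hA : (s + κ) ^ α ≤ (s + t + κ) ^ α :=
      Real.rpow_le_rpow (by linarith) (by linarith) hα
    have hkey := key_rpow_ineq α hα hy0 hyx
    have hst : s - t ≤ ‖ξ - ζ‖ := by
      have := norm_sub_norm_le ξ ζ
      rw [← hs', ← ht'] at this
      linarith
    have hnn : 0 ≤ ‖ξ - ζ‖ := norm_nonneg _
    have hMnn : 0 ≤ (s + t + κ) ^ α := Real.rpow_nonneg (by linarith) α
    calc ‖((s + κ) ^ α) • (ξ - ζ) + ((s + κ) ^ α - (t + κ) ^ α) • ζ‖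
        ≤ ‖((s + κ) ^ α) • (ξ - ζ)‖ + ‖((s + κ) ^ α - (t + κ) ^ α) • ζ‖ :=
          norm_add_le _ _
      _ = (s + κ) ^ α * ‖ξ - ζ‖ + ((s + κ) ^ α - (t + κ) ^ α) * t := by
          rw [norm_smul, norm_smul, Real.norm_eq_abs, Real.norm_eq_abs,
            abs_of_nonneg (Real.rpow_nonneg (by linarith) α), abs_of_nonneg hD]
      _ ≤ (α + 1) * (s + t + κ) ^ α * ‖ξ - ζ‖ := by
          have h2 : ((s + κ) ^ α - (t + κ) ^ α) * t
              ≤ ((s + κ) ^ α - (t + κ) ^ α) * (t + κ) :=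
            mul_le_mul_of_nonneg_left (by linarith) hD
          have h3 : α * (s + κ) ^ α * ((s + κ) - (t + κ))
              ≤ α * (s + t + κ) ^ α * (s - t) := by
            have : (s + κ) - (t + κ) = s - t := by ring
            rw [this]
            exact mul_le_mul_of_nonneg_right
              (mul_le_mul_of_nonneg_left hA hα) (by linarith)
          have h4 : α * (s + t + κ) ^ α * (s - t)
              ≤ α * (s + t + κ) ^ α * ‖ξ - ζ‖ :=
            mul_le_mul_of_nonneg_left hst (by positivity)
          have h5 : (s + κ) ^ α * ‖ξ - ζ‖ ≤ (s + t + κ) ^ α * ‖ξ - ζ‖ :=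
            mul_le_mul_of_nonneg_right hA hnn
          nlinarith [hkey, h2, h3, h4, h5]
  intro n ξ ζ
  rcases le_total ‖ζ‖ ‖ξ‖ with h | h
  · exact main n ξ ζ h
  · have := main n ζ ξ h
    have e : ‖ζ‖ + ‖ξ‖ + κ = ‖ξ‖ + ‖ζ‖ + κ := by ring
    rw [norm_sub_rev (E n ζ), norm_sub_rev ζ ξ, e] at this
    exact this
end

section
/- Let p ≥ 2, κ ∈ [0,1] and γ ∈ [1/(p−1), 1], and let E(ξ) = (|ξ| + κ)^{γp − γ − 1} ξ. Then there is a constant C = C(p, γ) > 0 such that for all ξ, ζ ∈ ℝⁿ, |E(ξ) − E(ζ)|^{1/γ} ≤ C (|ξ| + |ζ| + κ)^{p−2} |ξ − ζ|. -/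
open Real Set

/-- MVT-based estimate: `(a^α - b^α) * t ≤ α * (a-b) * M^α` for `0 ≤ t ≤ b ≤ a ≤ M`. -/
lemma st3_key {α a b t M : ℝ} (hα : 0 ≤ α) (ht : 0 ≤ t) (htb : t ≤ b)
    (hba : b ≤ a) (haM : a ≤ M) (hb : 0 ≤ b) :
    (a ^ α - b ^ α) * t ≤ α * (a - b) * M ^ α := by
  rcases eq_or_lt_of_le hba with rfl | hlt
  · simp
  rcases eq_or_lt_of_le hα with rfl | hαpos
  · simp
  -- MVT
  have hcont : ContinuousOn (fun x : ℝ => x ^ α) (Icc b a) :=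
    (Real.continuous_rpow_const hα).continuousOn
  have hderiv : ∀ x ∈ Ioo b a, HasDerivAt (fun x : ℝ => x ^ α) (α * x ^ (α - 1)) x := by
    intro x hx
    have hx0 : x ≠ 0 := by have := hb.trans_lt hx.1; positivity
    exact Real.hasDerivAt_rpow_const (p := α) (Or.inl hx0)
  obtain ⟨c, hc, hceq⟩ := exists_hasDerivAt_eq_slope (fun x : ℝ => x ^ α)
    (fun x => α * x ^ (α - 1)) hlt hcont hderiv
  have hcpos : 0 < c := lt_of_le_of_lt hb hc.1
  have hMpos : 0 < M := hcpos.trans_le (hc.2.le.trans haM)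
  have hdiff : a ^ α - b ^ α = α * c ^ (α - 1) * (a - b) := by
    rw [eq_div_iff (sub_ne_zero.mpr hlt.ne')] at hceq
    linarith [hceq]
  rw [hdiff]
  have h1 : c ^ (α - 1) * t ≤ c ^ α := by
    calc c ^ (α - 1) * t ≤ c ^ (α - 1) * c := by
          apply mul_le_mul_of_nonneg_left (htb.trans (hc.1.le)) (Real.rpow_nonneg hcpos.le _)
      _ = c ^ α := by rw [← Real.rpow_add_one hcpos.ne' (α - 1)]; ring_nf
  have h2 : c ^ α ≤ M ^ α := Real.rpow_le_rpow hcpos.le (hc.2.le.trans haM) hα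
  calc α * c ^ (α - 1) * (a - b) * t = α * (a - b) * (c ^ (α - 1) * t) := by ring
    _ ≤ α * (a - b) * (M ^ α) := by
        apply mul_le_mul_of_nonneg_left (h1.trans h2)
        have : 0 ≤ a - b := by linarith
        positivity


/-- For `p ≥ 2`, `κ ∈ [0,1]`, `γ ∈ [1/(p-1), 1]` and
`E(ξ) = (|ξ| + κ)^(γp - γ - 1) ξ`, there is `C = C(p,γ) > 0` such that
`|E(ξ) - E(ζ)|^(1/γ) ≤ C (|ξ| + |ζ| + κ)^(p-2) |ξ - ζ|` for all `ξ, ζ ∈ ℝⁿ`. -/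
theorem statement3 (p κ γ : ℝ) (hp : 2 ≤ p) (hκ : κ ∈ Set.Icc (0:ℝ) 1)
    (hγ : γ ∈ Set.Icc (1/(p-1)) 1)
    (E : ∀ n : ℕ, EuclideanSpace ℝ (Fin n) → EuclideanSpace ℝ (Fin n))
    (hE : ∀ (n : ℕ) (ξ : EuclideanSpace ℝ (Fin n)),
      E n ξ = ((‖ξ‖ + κ) ^ (γ * p - γ - 1)) • ξ) :
    ∃ C : ℝ, 0 < C ∧ ∀ (n : ℕ) (ξ ζ : EuclideanSpace ℝ (Fin n)),
      ‖E n ξ - E n ζ‖ ^ (1/γ) ≤ C * (‖ξ‖ + ‖ζ‖ + κ) ^ (p - 2) * ‖ξ - ζ‖ := by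
  obtain ⟨hκ0, hκ1⟩ := hκ
  obtain ⟨hγl, hγ1⟩ := hγ
  have hp1 : (0:ℝ) < p - 1 := by linarith
  have hγpos : 0 < γ := lt_of_lt_of_le (by positivity) hγl
  set α : ℝ := γ * p - γ - 1 with hαdef
  have hα0 : 0 ≤ α := by
    have : 1 / (p - 1) * (p - 1) ≤ γ * (p - 1) :=
      mul_le_mul_of_nonneg_right hγl hp1.le
    rw [one_div_mul_cancel hp1.ne'] at this
    simp only [hαdef]; nlinarith
  have hαp : α + 1 = γ * (p - 1) := by simp only [hαdef]; ring
  -- Step 1: Lipschitz estimate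
  have lip : ∀ (n : ℕ) (ξ ζ : EuclideanSpace ℝ (Fin n)),
      ‖E n ξ - E n ζ‖ ≤ (1 + α) * (‖ξ‖ + ‖ζ‖ + κ) ^ α * ‖ξ - ζ‖ := by
    have main : ∀ (n : ℕ) (ξ ζ : EuclideanSpace ℝ (Fin n)), ‖ζ‖ ≤ ‖ξ‖ →
        ‖E n ξ - E n ζ‖ ≤ (1 + α) * (‖ξ‖ + ‖ζ‖ + κ) ^ α * ‖ξ - ζ‖ := by
      intro n ξ ζ hle
      set a : ℝ := ‖ξ‖ + κ with ha
      set b : ℝ := ‖ζ‖ + κ with hb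
      set M : ℝ := ‖ξ‖ + ‖ζ‖ + κ with hM
      have hb0 : 0 ≤ b := by positivity
      have hba : b ≤ a := by simp only [ha, hb]; linarith
      have haM : a ≤ M := by have := norm_nonneg ζ; simp only [ha, hM]; linarith
      have hM0 : 0 ≤ M := by positivity
      have hsplit : E n ξ - E n ζ = (a ^ α) • (ξ - ζ) + (a ^ α - b ^ α) • ζ := by
        rw [hE, hE]
        module
      rw [hsplit]
      have h1 : ‖(a ^ α) • (ξ - ζ)‖ ≤ M ^ α * ‖ξ - ζ‖ := by
        rw [norm_smul, Real.norm_eq_abs, abs_of_nonneg (Real.rpow_nonneg (by positivity) _)]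
        exact mul_le_mul_of_nonneg_right (Real.rpow_le_rpow (by positivity) haM hα0)
          (norm_nonneg _)
      have h2 : ‖(a ^ α - b ^ α) • ζ‖ ≤ α * M ^ α * ‖ξ - ζ‖ := by
        rw [norm_smul, Real.norm_eq_abs,
          abs_of_nonneg (sub_nonneg.2 (Real.rpow_le_rpow hb0 hba hα0))]
        have hk := st3_key hα0 (norm_nonneg ζ) (by simp only [hb]; linarith) hba haM hb0
        have hab : a - b = ‖ξ‖ - ‖ζ‖ := by simp only [ha, hb]; ring
        have hnn : ‖ξ‖ - ‖ζ‖ ≤ ‖ξ - ζ‖ := norm_sub_norm_le ξ ζ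
        calc (a ^ α - b ^ α) * ‖ζ‖ ≤ α * (a - b) * M ^ α := hk
          _ = α * M ^ α * (‖ξ‖ - ‖ζ‖) := by rw [hab]; ring
          _ ≤ α * M ^ α * ‖ξ - ζ‖ := by
              apply mul_le_mul_of_nonneg_left hnn; positivity
      calc ‖(a ^ α) • (ξ - ζ) + (a ^ α - b ^ α) • ζ‖
          ≤ ‖(a ^ α) • (ξ - ζ)‖ + ‖(a ^ α - b ^ α) • ζ‖ := norm_add_le _ _
        _ ≤ M ^ α * ‖ξ - ζ‖ + α * M ^ α * ‖ξ - ζ‖ := add_le_add h1 h2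
        _ = (1 + α) * M ^ α * ‖ξ - ζ‖ := by ring
    intro n ξ ζ
    rcases le_total ‖ζ‖ ‖ξ‖ with h | h
    · exact main n ξ ζ h
    · have := main n ζ ξ h
      rw [norm_sub_rev (E n ξ), norm_sub_rev ξ]
      calc ‖E n ζ - E n ξ‖ ≤ (1 + α) * (‖ζ‖ + ‖ξ‖ + κ) ^ α * ‖ζ - ξ‖ := this
        _ = (1 + α) * (‖ξ‖ + ‖ζ‖ + κ) ^ α * ‖ζ - ξ‖ := by ring_nf
  -- Step 2: conclusion
  refine ⟨(1 + α) ^ (1/γ), by positivity, fun n ξ ζ => ?_⟩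
  set M : ℝ := ‖ξ‖ + ‖ζ‖ + κ with hM
  set d : ℝ := ‖ξ - ζ‖ with hd
  have hM0 : 0 ≤ M := by positivity
  rcases eq_or_lt_of_le (norm_nonneg (ξ - ζ)) with hd0 | hdpos
  · -- d = 0
    have hξζ : ξ = ζ := norm_sub_eq_zero_iff.mp hd0.symm
    rw [hξζ, sub_self, norm_zero,
      Real.zero_rpow (one_div_pos.mpr hγpos).ne', show d = 0 from hd0.symm, mul_zero]
  · have hdM : d ≤ M := by
      have := norm_sub_le ξ ζ
      simp only [hd, hM]; linarith
    have hMpos : 0 < M := lt_of_lt_of_le hdpos hdM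
    have hDnn : 0 ≤ ‖E n ξ - E n ζ‖ := norm_nonneg _
    have step1 : ‖E n ξ - E n ζ‖ ^ (1/γ) ≤ ((1 + α) * M ^ α * d) ^ (1/γ) :=
      Real.rpow_le_rpow hDnn (lip n ξ ζ) (by positivity)
    refine step1.trans ?_
    rw [Real.mul_rpow (by positivity) hdpos.le, Real.mul_rpow (by positivity) (by positivity),
      ← Real.rpow_mul hMpos.le]
    have hγinv : 0 ≤ 1/γ - 1 := by
      rw [le_sub_iff_add_le, zero_add, le_div_iff₀ hγpos, one_mul]; exact hγ1
    have hdr : d ^ (1/γ) = d ^ (1/γ - 1) * d := by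
      rw [← Real.rpow_add_one hdpos.ne']; ring_nf; rfl
    have hdd : d ^ (1/γ - 1) ≤ M ^ (1/γ - 1) := Real.rpow_le_rpow hdpos.le hdM hγinv
    have hMM : M ^ (α * (1/γ)) * M ^ (1/γ - 1) = M ^ (p - 2) := by
      rw [← Real.rpow_add hMpos]
      congr 1
      rw [hαdef]
      field_simp
      ring
    calc (1 + α) ^ (1/γ) * M ^ (α * (1/γ)) * d ^ (1/γ)
        = (1 + α) ^ (1/γ) * M ^ (α * (1/γ)) * (d ^ (1/γ - 1) * d) := by rw [hdr]
      _ ≤ (1 + α) ^ (1/γ) * M ^ (α * (1/γ)) * (M ^ (1/γ - 1) * d) := by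
          apply mul_le_mul_of_nonneg_left _ (by positivity)
          exact mul_le_mul_of_nonneg_right hdd hdpos.le
      _ = (1 + α) ^ (1/γ) * (M ^ (α * (1/γ)) * M ^ (1/γ - 1)) * d := by ring
      _ = (1 + α) ^ (1/γ) * M ^ (p - 2) * d := by rw [hMM]
end

section
/- Let n ≥ 1, p ≥ 2, κ ∈ [0,1], c ≥ 1, γ ∈ [1/(p−1), 1], let E(ξ) = (|ξ| + κ)^{γp − γ − 1} ξ, and let A : ℝⁿ → ℝⁿ be continuously differentiable with ⟨∂_z A(z) ζ, ζ⟩ ≥ c^{−1} (|z|² + κ²)^{(p−2)/2} |ζ|² for all z, ζ ∈ ℝⁿ. Then there is a constant C = C(p, γ, c) > 0 such that for all ξ, ζ ∈ ℝⁿ, |E(ξ) − E(ζ)|^{1/γ} ≤ C |A(ξ) − A(ζ)|. -/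
open scoped RealInnerProductSpace
open Real

/-- Key scalar inequality: for `0 ≤ b ≤ a` and `0 ≤ α`,
`(a^α - b^α) * b ≤ α * a^α * (a - b)`. -/
lemma stmt5_key_scalar {a b α : ℝ} (hb : 0 ≤ b) (hba : b ≤ a) (hα : 0 ≤ α) :
    (a ^ α - b ^ α) * b ≤ α * a ^ α * (a - b) := by
  rcases eq_or_lt_of_le hb with rfl | hb0
  · have ha : 0 ≤ a := hba
    have : 0 ≤ α * a ^ α * (a - 0) := by
      have h1 : (0:ℝ) ≤ a ^ α := Real.rpow_nonneg hba α
      have h2 : (0:ℝ) ≤ a - 0 := by linarith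
      positivity
    simpa using this
  have ha : 0 < a := hb0.trans_le hba
  have hbα : (0:ℝ) < b ^ α := Real.rpow_pos_of_pos hb0 α
  have haα : (0:ℝ) < a ^ α := Real.rpow_pos_of_pos ha α
  have hbaα : b ^ α ≤ a ^ α := Real.rpow_le_rpow hb0.le hba hα
  rcases le_or_gt α 1 with h1 | h1
  · -- Bernoulli: (a/b)^α ≤ 1 + α (a/b - 1)
    have hs : -1 ≤ a / b - 1 := by
      have : 0 < a / b := div_pos ha hb0
      linarith
    have hber := rpow_one_add_le_one_add_mul_self hs hα h1
    rw [add_sub_cancel] at hber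
    -- (a/b)^α = a^α / b^α
    rw [Real.div_rpow ha.le hb0.le] at hber
    -- a^α / b^α ≤ 1 + α (a/b - 1); multiply by b^α * b
    have key : a ^ α - b ^ α ≤ α * b ^ α * (a / b - 1) := by
      have := mul_le_mul_of_nonneg_right hber hbα.le
      rw [div_mul_cancel₀ _ hbα.ne'] at this
      nlinarith
    have : (a ^ α - b ^ α) * b ≤ α * b ^ α * (a - b) := by
      have := mul_le_mul_of_nonneg_right key hb0.le
      calc (a ^ α - b ^ α) * b ≤ α * b ^ α * (a / b - 1) * b := this
        _ = α * b ^ α * (a - b) := by field_simp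
    refine this.trans ?_
    have hab : 0 ≤ a - b := by linarith
    have h3 : α * b ^ α ≤ α * a ^ α := mul_le_mul_of_nonneg_left hbaα hα
    exact mul_le_mul_of_nonneg_right h3 hab
  · -- Bernoulli: (b/a)^α ≥ 1 + α (b/a - 1)
    have hs : -1 ≤ b / a - 1 := by
      have : 0 < b / a := div_pos hb0 ha
      linarith
    have hber := one_add_mul_self_le_rpow_one_add hs h1.le
    rw [add_sub_cancel] at hber
    rw [Real.div_rpow hb0.le ha.le] at hber
    -- 1 + α(b/a - 1) ≤ b^α / a^α; multiply by a^α
    have key : a ^ α - b ^ α ≤ α * a ^ α * (1 - b / a) := by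
      have := mul_le_mul_of_nonneg_right hber haα.le
      rw [div_mul_cancel₀ _ haα.ne'] at this
      nlinarith
    have key2 : a ^ α - b ^ α ≤ α * a ^ α * (a - b) / a := by
      calc a ^ α - b ^ α ≤ α * a ^ α * (1 - b / a) := key
        _ = α * a ^ α * (a - b) / a := by field_simp
    have := mul_le_mul_of_nonneg_right key2 hb0.le
    calc (a ^ α - b ^ α) * b ≤ α * a ^ α * (a - b) / a * b := this
      _ ≤ α * a ^ α * (a - b) / a * a := by
          have h0 : 0 ≤ α * a ^ α * (a - b) / a := by
            have : 0 ≤ a - b := by linarith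
            positivity
          exact mul_le_mul_of_nonneg_left hba h0
      _ = α * a ^ α * (a - b) := by field_simp

/-- One-sided bound for the difference of `E`. -/
lemma stmt5_Ebound {V : Type*} [NormedAddCommGroup V] [NormedSpace ℝ V]
    {ξ ζ : V} {κ α : ℝ} (hκ : 0 ≤ κ) (hα : 0 ≤ α) (hle : ‖ζ‖ ≤ ‖ξ‖) :
    ‖((‖ξ‖ + κ) ^ α) • ξ - ((‖ζ‖ + κ) ^ α) • ζ‖
      ≤ (1 + α) * (‖ξ‖ + ‖ζ‖ + κ) ^ α * ‖ξ - ζ‖ := by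
  set a := ‖ξ‖ + κ with ha_def
  set b := ‖ζ‖ + κ with hb_def
  set S := ‖ξ‖ + ‖ζ‖ + κ with hS_def
  have hb0 : 0 ≤ b := by positivity
  have hba : b ≤ a := by simp only [ha_def, hb_def]; linarith
  have ha0 : 0 ≤ a := hb0.trans hba
  have haS : a ≤ S := by have := norm_nonneg ζ; simp only [ha_def, hS_def]; linarith
  have hS0 : 0 ≤ S := ha0.trans haS
  have hrw : (a ^ α) • ξ - (b ^ α) • ζ = (a ^ α) • (ξ - ζ) + (a ^ α - b ^ α) • ζ := by
    rw [smul_sub, sub_smul]; abel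
  have hbaα : b ^ α ≤ a ^ α := Real.rpow_le_rpow hb0 hba hα
  have haSα : a ^ α ≤ S ^ α := Real.rpow_le_rpow ha0 haS hα
  have hterm1 : ‖(a ^ α) • (ξ - ζ)‖ ≤ S ^ α * ‖ξ - ζ‖ := by
    rw [norm_smul, Real.norm_eq_abs, abs_of_nonneg (Real.rpow_nonneg ha0 α)]
    exact mul_le_mul_of_nonneg_right haSα (norm_nonneg _)
  have hterm2 : ‖(a ^ α - b ^ α) • ζ‖ ≤ α * S ^ α * ‖ξ - ζ‖ := by
    rw [norm_smul, Real.norm_eq_abs, abs_of_nonneg (by linarith : (0:ℝ) ≤ a ^ α - b ^ α)]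
    have hζb : ‖ζ‖ ≤ b := by simp only [hb_def]; linarith
    have h1 : (a ^ α - b ^ α) * ‖ζ‖ ≤ (a ^ α - b ^ α) * b :=
      mul_le_mul_of_nonneg_left hζb (by linarith)
    have h2 : (a ^ α - b ^ α) * b ≤ α * a ^ α * (a - b) := stmt5_key_scalar hb0 hba hα
    have hab : a - b ≤ ‖ξ - ζ‖ := by
      have := abs_norm_sub_norm_le ξ ζ
      have h3 : ‖ξ‖ - ‖ζ‖ ≤ ‖ξ - ζ‖ := (abs_le.mp this).2
      simp only [ha_def, hb_def]; linarith
    have h4 : α * a ^ α * (a - b) ≤ α * S ^ α * ‖ξ - ζ‖ := by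
      have hαa : α * a ^ α ≤ α * S ^ α := mul_le_mul_of_nonneg_left haSα hα
      have hab0 : 0 ≤ a - b := by linarith
      calc α * a ^ α * (a - b) ≤ α * S ^ α * (a - b) := mul_le_mul_of_nonneg_right hαa hab0
        _ ≤ α * S ^ α * ‖ξ - ζ‖ := by
            refine mul_le_mul_of_nonneg_left hab ?_
            have : (0:ℝ) ≤ S ^ α := Real.rpow_nonneg hS0 α
            positivity
    linarith
  calc ‖(a ^ α) • ξ - (b ^ α) • ζ‖ = ‖(a ^ α) • (ξ - ζ) + (a ^ α - b ^ α) • ζ‖ := by rw [hrw]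
    _ ≤ ‖(a ^ α) • (ξ - ζ)‖ + ‖(a ^ α - b ^ α) • ζ‖ := norm_add_le _ _
    _ ≤ S ^ α * ‖ξ - ζ‖ + α * S ^ α * ‖ξ - ζ‖ := add_le_add hterm1 hterm2
    _ = (1 + α) * S ^ α * ‖ξ - ζ‖ := by ring

/-- One-sided lower bound for the monotonicity of `A`. -/
lemma stmt5_Abound {n : ℕ} {p κ c : ℝ} (hp : 2 ≤ p) (hκ0 : 0 ≤ κ) (hc : 1 ≤ c)
    {A : EuclideanSpace ℝ (Fin n) → EuclideanSpace ℝ (Fin n)}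
    (hA : ContDiff ℝ 1 A)
    (hell : ∀ z ζ : EuclideanSpace ℝ (Fin n),
      c⁻¹ * (‖z‖ ^ 2 + κ ^ 2) ^ ((p - 2) / 2) * ‖ζ‖ ^ 2 ≤ ⟪fderiv ℝ A z ζ, ζ⟫)
    (ξ ζ : EuclideanSpace ℝ (Fin n)) (hle : ‖ζ‖ ≤ ‖ξ‖) :
    c⁻¹ * (((‖ξ‖ + ‖ζ‖ + κ) / 8) ^ (p - 2)) * ‖ξ - ζ‖ ^ 2 * 4⁻¹
      ≤ ⟪A ξ - A ζ, ξ - ζ⟫ := by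
  have hc0 : (0:ℝ) < c := lt_of_lt_of_le one_pos hc
  have hnξ : (0:ℝ) ≤ ‖ξ‖ := norm_nonneg _
  have hnζ : (0:ℝ) ≤ ‖ζ‖ := norm_nonneg _
  set w := ξ - ζ with hw_def
  set S := ‖ξ‖ + ‖ζ‖ + κ with hS_def
  set K := c⁻¹ * ((S / 8) ^ (p - 2)) * ‖w‖ ^ 2 with hK_def
  set g : ℝ → ℝ := fun t => ⟪A (ζ + t • w), w⟫ with hg_def
  have hg : ∀ t : ℝ, HasDerivAt g ⟪(fderiv ℝ A (ζ + t • w)) w, w⟫ t := by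
    intro t
    have h1 : HasDerivAt (fun t : ℝ => ζ + t • w) w t := by
      simpa using ((hasDerivAt_id t).smul_const w).const_add ζ
    have h2 : HasFDerivAt A (fderiv ℝ A (ζ + t • w)) (ζ + t • w) :=
      ((hA.differentiable one_ne_zero) (ζ + t • w)).hasFDerivAt
    have h3 : HasDerivAt (fun s : ℝ => A (ζ + s • w)) ((fderiv ℝ A (ζ + t • w)) w) t :=
      h2.comp_hasDerivAt t h1
    have h4 := h3.inner ℝ (hasDerivAt_const t w)
    rw [hg_def]
    simpa using h4
  have hgdiff : Differentiable ℝ g := fun t => (hg t).differentiableAt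
  have hg' : ∀ t : ℝ, deriv g t = ⟪(fderiv ℝ A (ζ + t • w)) w, w⟫ := fun t => (hg t).deriv
  have hnonneg : ∀ t : ℝ, 0 ≤ deriv g t := by
    intro t
    rw [hg' t]
    refine le_trans ?_ (hell (ζ + t • w) w)
    have h5 : (0:ℝ) ≤ (‖ζ + t • w‖ ^ 2 + κ ^ 2) ^ ((p - 2) / 2) :=
      Real.rpow_nonneg (by positivity) _
    have h6 : (0:ℝ) ≤ c⁻¹ := inv_nonneg.mpr hc0.le
    positivity
  have hmono : Monotone g := monotone_of_deriv_nonneg hgdiff hnonneg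
  have hKle : ∀ t ∈ interior (Set.Icc (3/4 : ℝ) 1), K ≤ deriv g t := by
    intro t ht
    rw [interior_Icc] at ht
    obtain ⟨ht1, ht2⟩ := ht
    rw [hg' t]
    refine le_trans ?_ (hell (ζ + t • w) w)
    have hz_eq : ζ + t • w = t • ξ + (1 - t) • ζ := by
      simp only [hw_def, smul_sub, sub_smul, one_smul]; abel
    have hz : (‖ξ‖ + ‖ζ‖) / 4 ≤ ‖ζ + t • w‖ := by
      rw [hz_eq]
      have h6 : ‖t • ξ‖ - ‖-((1 - t) • ζ)‖ ≤ ‖t • ξ - -((1 - t) • ζ)‖ :=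
        norm_sub_norm_le _ _
      rw [sub_neg_eq_add, norm_neg, norm_smul, norm_smul, Real.norm_eq_abs,
        Real.norm_eq_abs, abs_of_nonneg (by linarith : (0:ℝ) ≤ t),
        abs_of_nonneg (by linarith : (0:ℝ) ≤ 1 - t)] at h6
      nlinarith
    have hz0 : (0:ℝ) ≤ ‖ζ + t • w‖ := norm_nonneg _
    have hz2 : S / 8 ≤ (‖ζ + t • w‖ + κ) / 2 := by
      simp only [hS_def]; linarith
    have hz3 : ((‖ζ + t • w‖ + κ) / 2) ^ 2 ≤ ‖ζ + t • w‖ ^ 2 + κ ^ 2 := by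
      nlinarith [sq_nonneg (‖ζ + t • w‖ - κ)]
    have hX0 : (0:ℝ) ≤ (‖ζ + t • w‖ + κ) / 2 := by positivity
    have hS80 : (0:ℝ) ≤ S / 8 := by simp only [hS_def]; linarith
    have hp2 : (0:ℝ) ≤ p - 2 := by linarith
    have step1 : (S / 8) ^ (p - 2) ≤ ((‖ζ + t • w‖ + κ) / 2) ^ (p - 2) :=
      Real.rpow_le_rpow hS80 hz2 hp2
    have step2 : ((‖ζ + t • w‖ + κ) / 2) ^ (p - 2)
        = ((((‖ζ + t • w‖ + κ) / 2) ^ 2 : ℝ)) ^ ((p - 2) / 2) := by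
      rw [← Real.rpow_natCast ((‖ζ + t • w‖ + κ) / 2) 2, ← Real.rpow_mul hX0]
      congr 1
      ring
    have step3 : ((((‖ζ + t • w‖ + κ) / 2) ^ 2 : ℝ)) ^ ((p - 2) / 2)
        ≤ (‖ζ + t • w‖ ^ 2 + κ ^ 2) ^ ((p - 2) / 2) :=
      Real.rpow_le_rpow (by positivity) hz3 (by linarith)
    have key : (S / 8) ^ (p - 2) ≤ (‖ζ + t • w‖ ^ 2 + κ ^ 2) ^ ((p - 2) / 2) := by
      rw [step2] at step1; exact step1.trans step3
    have h7 : (0:ℝ) ≤ c⁻¹ := inv_nonneg.mpr hc0.le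
    rw [hK_def]
    exact mul_le_mul_of_nonneg_right
      (mul_le_mul_of_nonneg_left key h7) (sq_nonneg _)
  have hmem34 : (3/4 : ℝ) ∈ Set.Icc (3/4 : ℝ) 1 := by norm_num
  have hmem1 : (1 : ℝ) ∈ Set.Icc (3/4 : ℝ) 1 := by norm_num
  have h2 := (convex_Icc (3/4 : ℝ) 1).mul_sub_le_image_sub_of_le_deriv
    hgdiff.continuous.continuousOn (hgdiff.differentiableOn) hKle
    (3/4) hmem34 1 hmem1 (by norm_num)
  have h1 : g 0 ≤ g (3/4) := hmono (by norm_num)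
  have hz1 : ζ + (1:ℝ) • w = ξ := by rw [one_smul, hw_def]; abel
  have hval1 : g 1 = ⟪A ξ, w⟫ := by simp only [hg_def]; rw [hz1]
  have hval0 : g 0 = ⟪A ζ, w⟫ := by simp only [hg_def, zero_smul, add_zero]
  rw [inner_sub_left]
  have hfin : K * (1 - 3/4) ≤ g 1 - g (3/4) := h2
  rw [hval1] at hfin
  rw [hval0] at h1
  linarith [hfin, h1]

/-- For `p ≥ 2`, `κ ∈ [0,1]`, `c ≥ 1`, `γ ∈ [1/(p-1), 1]`,
`E(ξ) = (|ξ| + κ)^(γp - γ - 1) ξ`, and `A : ℝⁿ → ℝⁿ` continuously differentiable with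
`⟨∂A(z)ζ, ζ⟩ ≥ c⁻¹ (|z|² + κ²)^((p-2)/2) |ζ|²`, there exists `C = C(p,γ,c) > 0` such that
`|E(ξ) - E(ζ)|^(1/γ) ≤ C |A(ξ) - A(ζ)|` for all `ξ, ζ ∈ ℝⁿ`. -/
theorem statement5 (n : ℕ) (hn : 1 ≤ n) (p κ c γ : ℝ) (hp : 2 ≤ p)
    (hκ : κ ∈ Set.Icc (0:ℝ) 1) (hc : 1 ≤ c) (hγ : γ ∈ Set.Icc (1/(p-1)) 1)
    (E : EuclideanSpace ℝ (Fin n) → EuclideanSpace ℝ (Fin n))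
    (hE : ∀ ξ : EuclideanSpace ℝ (Fin n), E ξ = ((‖ξ‖ + κ) ^ (γ * p - γ - 1)) • ξ)
    (A : EuclideanSpace ℝ (Fin n) → EuclideanSpace ℝ (Fin n))
    (hA : ContDiff ℝ 1 A)
    (hell : ∀ z ζ : EuclideanSpace ℝ (Fin n),
      c⁻¹ * (‖z‖ ^ 2 + κ ^ 2) ^ ((p - 2) / 2) * ‖ζ‖ ^ 2 ≤ ⟪fderiv ℝ A z ζ, ζ⟫) :
    ∃ C : ℝ, 0 < C ∧ ∀ ξ ζ : EuclideanSpace ℝ (Fin n),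
      ‖E ξ - E ζ‖ ^ (1/γ) ≤ C * ‖A ξ - A ζ‖ := by

  obtain ⟨hκ0, hκ1⟩ := hκ
  obtain ⟨hγ1, hγ2⟩ := hγ
  have hp1 : (0:ℝ) < p - 1 := by linarith
  have hγpos : 0 < γ := lt_of_lt_of_le (by positivity) hγ1
  rw [div_le_iff₀ hp1] at hγ1
  set α := γ * p - γ - 1 with hα_def
  have hα0 : 0 ≤ α := by simp only [hα_def]; nlinarith
  have h1α : (0:ℝ) ≤ 1 + α := by linarith
  have hc0 : (0:ℝ) < c := lt_of_lt_of_le one_pos hc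
  have h8 : (0:ℝ) < (8:ℝ) ^ (p - 2) := Real.rpow_pos_of_pos (by norm_num) _
  have hinvγ : 1 ≤ 1/γ := by rw [le_div_iff₀ hγpos]; linarith
  have hCpos : 0 < (1 + α) ^ (1/γ) * (4 * c * (8:ℝ) ^ (p - 2)) := by
    have h1 : (0:ℝ) < (1 + α) ^ (1/γ) := Real.rpow_pos_of_pos (by linarith) _
    positivity
  refine ⟨(1 + α) ^ (1/γ) * (4 * c * (8:ℝ) ^ (p - 2)), hCpos, ?_⟩
  intro ξ ζ
  by_cases hxz : ξ = ζ
  · subst hxz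
    simp only [sub_self, norm_zero, mul_zero]
    rw [Real.zero_rpow (one_div_ne_zero hγpos.ne')]
  · have hwpos : 0 < ‖ξ - ζ‖ := by rw [norm_pos_iff, sub_ne_zero]; exact hxz
    set S := ‖ξ‖ + ‖ζ‖ + κ with hS_def
    have hwS : ‖ξ - ζ‖ ≤ S := le_trans (norm_sub_le _ _) (by simp only [hS_def]; linarith)
    have hS0 : 0 < S := lt_of_lt_of_le hwpos hwS
    have hSα : (0:ℝ) ≤ S ^ α := Real.rpow_nonneg hS0.le α
    -- E estimate
    have hEest : ‖E ξ - E ζ‖ ≤ (1 + α) * S ^ α * ‖ξ - ζ‖ := by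
      rw [hE ξ, hE ζ]
      rcases le_total ‖ζ‖ ‖ξ‖ with h | h
      · exact stmt5_Ebound hκ0 hα0 h
      · have key := stmt5_Ebound (ξ := ζ) (ζ := ξ) hκ0 hα0 h
        have e1 : ‖((‖ζ‖ + κ) ^ α) • ζ - ((‖ξ‖ + κ) ^ α) • ξ‖
            = ‖((‖ξ‖ + κ) ^ α) • ξ - ((‖ζ‖ + κ) ^ α) • ζ‖ := norm_sub_rev _ _
        have e2 : ‖ζ - ξ‖ = ‖ξ - ζ‖ := norm_sub_rev _ _
        have e3 : ‖ζ‖ + ‖ξ‖ + κ = S := by simp only [hS_def]; ring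
        rw [e1, e2, e3] at key
        exact key
    -- A estimate
    have hAest : c⁻¹ * ((S / 8) ^ (p - 2)) * ‖ξ - ζ‖ ^ 2 * 4⁻¹ ≤ ⟪A ξ - A ζ, ξ - ζ⟫ := by
      rcases le_total ‖ζ‖ ‖ξ‖ with h | h
      · exact stmt5_Abound hp hκ0 hc hA hell ξ ζ h
      · have key := stmt5_Abound hp hκ0 hc hA hell ζ ξ h
        have e2 : ‖ζ - ξ‖ = ‖ξ - ζ‖ := norm_sub_rev _ _
        have e3 : ‖ζ‖ + ‖ξ‖ + κ = S := by simp only [hS_def]; ring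
        have e4 : ⟪A ζ - A ξ, ζ - ξ⟫ = ⟪A ξ - A ζ, ξ - ζ⟫ := by
          rw [← neg_sub (A ξ) (A ζ), ← neg_sub ξ ζ, inner_neg_neg]
        rw [e2, e3, e4] at key
        exact key
    have hinner : ⟪A ξ - A ζ, ξ - ζ⟫ ≤ ‖A ξ - A ζ‖ * ‖ξ - ζ‖ := real_inner_le_norm _ _
    have hB : c⁻¹ * ((S / 8) ^ (p - 2)) * ‖ξ - ζ‖ * 4⁻¹ ≤ ‖A ξ - A ζ‖ := by
      have h9 := hAest.trans hinner
      have h10 : (c⁻¹ * ((S / 8) ^ (p - 2)) * ‖ξ - ζ‖ * 4⁻¹) * ‖ξ - ζ‖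
          ≤ ‖A ξ - A ζ‖ * ‖ξ - ζ‖ := by
        calc (c⁻¹ * ((S / 8) ^ (p - 2)) * ‖ξ - ζ‖ * 4⁻¹) * ‖ξ - ζ‖
            = c⁻¹ * ((S / 8) ^ (p - 2)) * ‖ξ - ζ‖ ^ 2 * 4⁻¹ := by ring
          _ ≤ ‖A ξ - A ζ‖ * ‖ξ - ζ‖ := h9
      exact le_of_mul_le_mul_right h10 hwpos
    have hrw1 : ‖E ξ - E ζ‖ ^ (1/γ) ≤ ((1 + α) * S ^ α * ‖ξ - ζ‖) ^ (1/γ) :=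
      Real.rpow_le_rpow (norm_nonneg _) hEest (by linarith)
    have hrw2 : ((1 + α) * S ^ α * ‖ξ - ζ‖) ^ (1/γ)
        = (1 + α) ^ (1/γ) * (S ^ (α / γ)) * ‖ξ - ζ‖ ^ (1/γ) := by
      rw [Real.mul_rpow (mul_nonneg h1α hSα) (norm_nonneg _), Real.mul_rpow h1α hSα,
        ← Real.rpow_mul hS0.le, mul_one_div]
    have hwγ : ‖ξ - ζ‖ ^ (1/γ) ≤ S ^ (1/γ - 1) * ‖ξ - ζ‖ := by
      have e5 : ‖ξ - ζ‖ ^ (1/γ) = ‖ξ - ζ‖ ^ (1/γ - 1) * ‖ξ - ζ‖ := by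
        have e6 := Real.rpow_add hwpos (1/γ - 1) 1
        rw [Real.rpow_one] at e6
        calc ‖ξ - ζ‖ ^ (1/γ) = ‖ξ - ζ‖ ^ ((1/γ - 1) + 1) := by congr 1; ring
          _ = ‖ξ - ζ‖ ^ (1/γ - 1) * ‖ξ - ζ‖ := e6
      rw [e5]
      exact mul_le_mul_of_nonneg_right
        (Real.rpow_le_rpow hwpos.le hwS (by linarith)) hwpos.le
    have hexp : α / γ + (1/γ - 1) = p - 2 := by
      simp only [hα_def]
      field_simp
      ring
    have hSmerge : S ^ (α/γ) * S ^ (1/γ - 1) = S ^ (p - 2) := by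
      rw [← Real.rpow_add hS0, hexp]
    have h1αγ : (0:ℝ) ≤ (1 + α) ^ (1/γ) := Real.rpow_nonneg h1α _
    calc ‖E ξ - E ζ‖ ^ (1/γ)
        ≤ (1 + α) ^ (1/γ) * (S ^ (α / γ)) * ‖ξ - ζ‖ ^ (1/γ) := by rw [← hrw2]; exact hrw1
      _ ≤ (1 + α) ^ (1/γ) * (S ^ (α / γ)) * (S ^ (1/γ - 1) * ‖ξ - ζ‖) := by
          refine mul_le_mul_of_nonneg_left hwγ ?_
          exact mul_nonneg h1αγ (Real.rpow_nonneg hS0.le _)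
      _ = (1 + α) ^ (1/γ) * (S ^ (p - 2) * ‖ξ - ζ‖) := by rw [← hSmerge]; ring
      _ ≤ (1 + α) ^ (1/γ) * ((4 * c * (8:ℝ) ^ (p - 2)) * ‖A ξ - A ζ‖) := by
          refine mul_le_mul_of_nonneg_left ?_ h1αγ
          have hdiv : (S / 8) ^ (p - 2) = S ^ (p - 2) / 8 ^ (p - 2) :=
            Real.div_rpow hS0.le (by norm_num : (0:ℝ) ≤ 8) (p - 2)
          rw [hdiv] at hB
          calc S ^ (p - 2) * ‖ξ - ζ‖
              = (4 * c * (8:ℝ) ^ (p - 2)) * (c⁻¹ * (S ^ (p - 2) / 8 ^ (p - 2)) * ‖ξ - ζ‖ * 4⁻¹) := by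
                field_simp
            _ ≤ (4 * c * (8:ℝ) ^ (p - 2)) * ‖A ξ - A ζ‖ := by
                refine mul_le_mul_of_nonneg_left hB ?_
                positivity
      _ = (1 + α) ^ (1/γ) * (4 * c * (8:ℝ) ^ (p - 2)) * ‖A ξ - A ζ‖ := by ring
end

section
/- Let n ≥ 2, let Ω ⊂ ℝⁿ be an open bounded set, σ ∈ (0,1), α, β ≥ 0, p ≥ 2, κ ∈ [0,1], c ≥ 1, γ ∈ [1/(p−1), 1], let E(ξ) = (|ξ| + κ)^{γp − γ − 1} ξ, and let A : ℝⁿ → ℝⁿ be continuously differentiable with ⟨∂_z A(z) ζ, ζ⟩ ≥ c^{−1} (|z|² + κ²)^{(p−2)/2} |ζ|². Then there is C = C(p, γ, c) > 0 such that for every measurable v : Ω → ℝⁿ, ∫_Ω ∫_Ω d^α(x) d^β(y) |E(v(x)) − E(v(y))|^{1/γ} / |x−y|^{n+σ} dx dy ≤ C ∫_Ω ∫_Ω d^α(x) d^β(y) |A(v(x)) − A(v(y))| / |x−y|^{n+σ} dx dy; equivalently, [E∘v]_{W_G^{γσ, 1/γ}(Ω;α,β)}^{1/γ} ≤ C [A∘v]_{W_G^{σ,1}(Ω;α,β)}.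 -/
open MeasureTheory
open scoped ENNReal RealInnerProductSpace

open Set

lemma aux_rpow_mvt {δ u v : ℝ} (hδ : 0 ≤ δ) (hv : 0 < v) (hvu : v ≤ u) :
    u ^ δ - v ^ δ ≤ δ * max (u ^ (δ - 1)) (v ^ (δ - 1)) * (u - v) := by
  rcases eq_or_lt_of_le hvu with rfl | h
  · simp
  · obtain ⟨x, hx, hslope⟩ := exists_hasDerivAt_eq_slope (fun t => t ^ δ)
      (fun t => δ * t ^ (δ - 1)) h
      (fun t ht => (Real.continuousAt_rpow_const t δ
        (Or.inl (ne_of_gt (lt_of_lt_of_le hv ht.1)))).continuousWithinAt)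
      (fun x hx => Real.hasDerivAt_rpow_const (Or.inl (ne_of_gt (hv.trans hx.1))))
    have hx0 : 0 < x := hv.trans hx.1
    have hbound : x ^ (δ - 1) ≤ max (u ^ (δ - 1)) (v ^ (δ - 1)) := by
      rcases le_or_gt 1 δ with h1 | h1
      · exact le_max_of_le_left (Real.rpow_le_rpow hx0.le hx.2.le (by linarith))
      · exact le_max_of_le_right (Real.rpow_le_rpow_of_nonpos hv hx.1.le (by linarith))
    rw [eq_div_iff (by linarith : u - v ≠ 0)] at hslope
    calc u ^ δ - v ^ δ = δ * x ^ (δ - 1) * (u - v) := hslope.symm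
      _ ≤ δ * max (u ^ (δ - 1)) (v ^ (δ - 1)) * (u - v) :=
          mul_le_mul_of_nonneg_right (mul_le_mul_of_nonneg_left hbound hδ) (by linarith)

lemma aux_L1' {δ u v s : ℝ} (hδ : 0 ≤ δ) (hv : 0 < v) (hvu : v ≤ u) (hs : 0 ≤ s)
    (hsu : s ≤ u) (hsplit : u ≤ 2 * v) :
    (u ^ δ - v ^ δ) * s ≤ 2 * δ * u ^ δ * (u - v) := by
  have hu : 0 < u := hv.trans_le hvu
  have h1 := aux_rpow_mvt hδ hv hvu
  have hmaxs : max (u ^ (δ - 1)) (v ^ (δ - 1)) * s ≤ 2 * u ^ δ := by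
    rcases le_or_gt 1 δ with h | h
    · rw [max_eq_left (Real.rpow_le_rpow hv.le hvu (by linarith))]
      calc u ^ (δ - 1) * s ≤ u ^ (δ - 1) * u :=
            mul_le_mul_of_nonneg_left hsu (Real.rpow_nonneg hu.le _)
        _ = u ^ δ := by rw [← Real.rpow_add_one hu.ne' (δ - 1)]; ring_nf
        _ ≤ 2 * u ^ δ := by nlinarith [Real.rpow_nonneg hu.le δ]
    · rw [max_eq_right (Real.rpow_le_rpow_of_nonpos hv hvu (by linarith))]
      calc v ^ (δ - 1) * s ≤ v ^ (δ - 1) * (2 * v) := by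
            apply mul_le_mul_of_nonneg_left (hsu.trans hsplit) (Real.rpow_nonneg hv.le _)
        _ = 2 * v ^ δ := by rw [show v ^ (δ-1) * (2*v) = 2 * (v ^ (δ-1) * v) by ring,
            ← Real.rpow_add_one hv.ne' (δ - 1)]; ring_nf
        _ ≤ 2 * u ^ δ := by nlinarith [Real.rpow_le_rpow hv.le hvu hδ]
  have hmax0 : 0 ≤ max (u ^ (δ - 1)) (v ^ (δ - 1)) :=
    le_max_of_le_left (Real.rpow_nonneg hu.le _)
  nlinarith [mul_le_mul_of_nonneg_right h1 hs,
    mul_le_mul_of_nonneg_left hmaxs (mul_nonneg hδ (by linarith : (0:ℝ) ≤ u - v))]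
lemma aux_L1 {δ u v s : ℝ} (hδ : 0 ≤ δ) (hu : 0 ≤ u) (hs : 0 ≤ s) (hsv : s ≤ v) :
    |u ^ δ - v ^ δ| * s ≤ (2 * δ + 2) * (max u v) ^ δ * |u - v| := by
  have hv : 0 ≤ v := hs.trans hsv
  rcases le_total v u with h | h
  · rw [max_eq_left h]
    have huδ : 0 ≤ u ^ δ := Real.rpow_nonneg hu _
    have hord : v ^ δ ≤ u ^ δ := Real.rpow_le_rpow hv h hδ
    rw [abs_of_nonneg (by linarith), abs_of_nonneg (by linarith : (0:ℝ) ≤ u - v)]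
    rcases lt_or_ge (v * 2) u with hc | hc
    · have hvδ : 0 ≤ v ^ δ := Real.rpow_nonneg hv _
      calc (u ^ δ - v ^ δ) * s ≤ u ^ δ * v := by nlinarith
        _ ≤ u ^ δ * (2 * (u - v)) := by nlinarith
        _ ≤ (2 * δ + 2) * u ^ δ * (u - v) := by
            nlinarith [mul_nonneg (mul_nonneg hδ huδ) (by linarith : (0:ℝ) ≤ u - v)]
    · rcases eq_or_lt_of_le hv with h0 | h0
      · have hs0 : s = 0 := le_antisymm (h0 ▸ hsv) hs
        simp only [hs0, mul_zero]
        exact mul_nonneg (mul_nonneg (by linarith) huδ) (by linarith)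
      · have key := aux_L1' hδ h0 h hs (hsv.trans h) (by linarith)
        nlinarith [mul_nonneg huδ (by linarith : (0:ℝ) ≤ u - v)]
  · rw [max_eq_right h]
    have hvδ : 0 ≤ v ^ δ := Real.rpow_nonneg hv _
    have hord : u ^ δ ≤ v ^ δ := Real.rpow_le_rpow hu h hδ
    rw [abs_sub_comm, abs_of_nonneg (by linarith), abs_sub_comm (u:ℝ),
      abs_of_nonneg (by linarith : (0:ℝ) ≤ v - u)]
    rcases lt_or_ge (u * 2) v with hc | hc
    · have huδ : 0 ≤ u ^ δ := Real.rpow_nonneg hu _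
      calc (v ^ δ - u ^ δ) * s ≤ v ^ δ * v := by nlinarith
        _ ≤ v ^ δ * (2 * (v - u)) := by nlinarith
        _ ≤ (2 * δ + 2) * v ^ δ * (v - u) := by
            nlinarith [mul_nonneg (mul_nonneg hδ hvδ) (by linarith : (0:ℝ) ≤ v - u)]
    · rcases eq_or_lt_of_le hu with h0 | h0
      · have hv0 : v = 0 := le_antisymm (by linarith) hv
        have hs0 : s = 0 := le_antisymm (hv0 ▸ hsv) hs
        simp only [hs0, mul_zero]
        exact mul_nonneg (mul_nonneg (by linarith) hvδ) (by linarith)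
      · have key := aux_L1' hδ h0 h hs hsv (by linarith)
        nlinarith [mul_nonneg hvδ (by linarith : (0:ℝ) ≤ v - u)]

lemma aux_stepA {n : ℕ} {κ δ : ℝ} (hκ : 0 ≤ κ) (hδ : 0 ≤ δ) (a b : EuclideanSpace ℝ (Fin n)) :
    ‖((‖a‖ + κ) ^ δ) • a - ((‖b‖ + κ) ^ δ) • b‖ ≤
      (2 * δ + 3) * (‖a‖ + ‖b‖ + κ) ^ δ * ‖a - b‖ := by
  set u := ‖a‖ + κ with hu
  set v := ‖b‖ + κ with hv
  set M := ‖a‖ + ‖b‖ + κ with hM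
  have hu0 : 0 ≤ u := by positivity
  have hv0 : 0 ≤ v := by positivity
  have hM0 : 0 ≤ M := by positivity
  have h1 : (u ^ δ) • a - (v ^ δ) • b = (u ^ δ) • (a - b) + (u ^ δ - v ^ δ) • b := by
    module
  rw [h1]
  refine (norm_add_le _ _).trans ?_
  rw [norm_smul, norm_smul, Real.norm_eq_abs, Real.norm_eq_abs,
    abs_of_nonneg (Real.rpow_nonneg hu0 δ)]
  have hbv : ‖b‖ ≤ v := by rw [hv]; linarith
  have h2 := aux_L1 hδ hu0 (norm_nonneg b) hbv
  have huv : |u - v| ≤ ‖a - b‖ := by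
    rw [hu, hv, show ‖a‖ + κ - (‖b‖ + κ) = ‖a‖ - ‖b‖ by ring]
    exact abs_norm_sub_norm_le a b
  have hmaxM : max u v ≤ M := by
    rw [max_le_iff]; constructor <;> [rw [hu, hM]; rw [hv, hM]] <;>
      [linarith [norm_nonneg b]; linarith [norm_nonneg a]]
  have hmax0 : 0 ≤ max u v := le_max_of_le_left hu0
  have hMδ : max u v ^ δ ≤ M ^ δ := Real.rpow_le_rpow hmax0 hmaxM hδ
  have huδM : u ^ δ ≤ M ^ δ := Real.rpow_le_rpow hu0 (by rw [hu, hM]; linarith [norm_nonneg b]) hδ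
  have hMδ0 : 0 ≤ M ^ δ := Real.rpow_nonneg hM0 δ
  have hab0 : 0 ≤ ‖a - b‖ := norm_nonneg _
  have t1 : u ^ δ * ‖a - b‖ ≤ M ^ δ * ‖a - b‖ := mul_le_mul_of_nonneg_right huδM hab0
  have t2 : |u ^ δ - v ^ δ| * ‖b‖ ≤ (2 * δ + 2) * (M ^ δ) * ‖a - b‖ := by
    refine h2.trans ?_
    have : (2 * δ + 2) * max u v ^ δ * |u - v| ≤ (2 * δ + 2) * (M ^ δ) * |u - v| := by
      apply mul_le_mul_of_nonneg_right (mul_le_mul_of_nonneg_left hMδ (by linarith)) (abs_nonneg _)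
    refine this.trans ?_
    apply mul_le_mul_of_nonneg_left huv (by positivity)
  nlinarith


set_option maxHeartbeats 1000000 in
open scoped RealInnerProductSpace in
lemma aux_stepB {n : ℕ} {p κ c : ℝ} (hp : 2 ≤ p) (hκ : 0 ≤ κ) (hc : 1 ≤ c)
    (A : EuclideanSpace ℝ (Fin n) → EuclideanSpace ℝ (Fin n)) (hA : ContDiff ℝ 1 A)
    (hell : ∀ z ζ : EuclideanSpace ℝ (Fin n),
      c⁻¹ * (‖z‖ ^ 2 + κ ^ 2) ^ ((p - 2) / 2) * ‖ζ‖ ^ 2 ≤ ⟪fderiv ℝ A z ζ, ζ⟫)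
    (a b : EuclideanSpace ℝ (Fin n)) (hba : ‖b‖ ≤ ‖a‖) :
    c⁻¹ * (4:ℝ)⁻¹ * (24:ℝ) ^ (-((p - 2) / 2)) *
      ((‖a‖ + ‖b‖ + κ) ^ (p - 2) * ‖a - b‖ ^ 2) ≤ ⟪A a - A b, a - b⟫ := by
  set q : ℝ := (p - 2) / 2 with hqdef
  have hq : 0 ≤ q := by rw [hqdef]; linarith
  set w := a - b with hw
  set z : ℝ → EuclideanSpace ℝ (Fin n) := fun t => b + t • w with hz
  set M := ‖a‖ + ‖b‖ + κ with hM
  have hM0 : 0 ≤ M := by positivity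
  have hAd : Differentiable ℝ A := hA.differentiable one_ne_zero
  have hzd : ∀ t : ℝ, HasDerivAt z w t := by
    intro t
    have : HasDerivAt (fun s : ℝ => s • w) ((1:ℝ) • w) t := (hasDerivAt_id t).smul_const w
    simpa [hz] using this.const_add b
  have hzc : Continuous z := by
    have : Continuous fun t : ℝ => t • w := continuous_id.smul continuous_const
    exact continuous_const.add this
  have hFc : Continuous fun t => (fderiv ℝ A (z t)) w :=
    ((hA.continuous_fderiv one_ne_zero).comp hzc).clm_apply continuous_const
  have hint : IntervalIntegrable (fun t => (fderiv ℝ A (z t)) w) MeasureTheory.volume 0 1 :=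
    hFc.intervalIntegrable _ _
  have hz1 : z 1 = a := by rw [hz]; simp only [one_smul, hw]; abel
  have hz0 : z 0 = b := by rw [hz]; simp only [zero_smul, add_zero]
  have hftc : (∫ t in (0:ℝ)..1, (fderiv ℝ A (z t)) w) = A a - A b := by
    have hder : ∀ t ∈ Set.uIcc (0:ℝ) 1, HasDerivAt (fun t => A (z t)) ((fderiv ℝ A (z t)) w) t :=
      fun t _ => (hAd (z t)).hasFDerivAt.comp_hasDerivAt t (hzd t)
    have h := intervalIntegral.integral_eq_sub_of_hasDerivAt hder hint
    rw [h, hz1, hz0]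
  have hswap : ⟪A a - A b, w⟫ = ∫ t in (0:ℝ)..1, ⟪(fderiv ℝ A (z t)) w, w⟫ := by
    calc ⟪A a - A b, w⟫ = (innerSL ℝ w) (∫ t in (0:ℝ)..1, (fderiv ℝ A (z t)) w) := by
          rw [hftc, innerSL_apply_apply]; exact real_inner_comm _ _
      _ = ∫ t in (0:ℝ)..1, (innerSL ℝ w) ((fderiv ℝ A (z t)) w) :=
          ((innerSL ℝ w).intervalIntegral_comp_comm hint).symm
      _ = ∫ t in (0:ℝ)..1, ⟪(fderiv ℝ A (z t)) w, w⟫ := by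
          refine intervalIntegral.integral_congr fun t _ => ?_
          rw [innerSL_apply_apply]; exact real_inner_comm _ _
  set g : ℝ → ℝ := fun t => c⁻¹ * (‖z t‖ ^ 2 + κ ^ 2) ^ q * ‖w‖ ^ 2 with hg
  have hrpc : Continuous fun x : ℝ => x ^ q :=
    continuous_iff_continuousAt.2 fun x => Real.continuousAt_rpow_const x q (Or.inr hq)
  have hgc : Continuous g :=
    ((continuous_const.mul (hrpc.comp ((hzc.norm.pow 2).add continuous_const))).mul
      continuous_const)
  have hc0 : 0 < c := lt_of_lt_of_le one_pos hc
  have hgnn : ∀ t, 0 ≤ g t := by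
    intro t
    have h0 : (0:ℝ) ≤ (‖z t‖ ^ 2 + κ ^ 2) ^ q := Real.rpow_nonneg (by positivity) q
    have : g t = c⁻¹ * (‖z t‖ ^ 2 + κ ^ 2) ^ q * ‖w‖ ^ 2 := rfl
    rw [this]; positivity
  have hic : Continuous fun t => ⟪(fderiv ℝ A (z t)) w, w⟫ := hFc.inner continuous_const
  have hmono : (∫ t in (0:ℝ)..1, g t) ≤ ∫ t in (0:ℝ)..1, ⟪(fderiv ℝ A (z t)) w, w⟫ :=
    intervalIntegral.integral_mono_on zero_le_one (hgc.intervalIntegrable _ _)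
      (hic.intervalIntegrable _ _) (fun t _ => hell (z t) w)
  set L : ℝ := c⁻¹ * ((24:ℝ) ^ (-q) * M ^ (p - 2)) * ‖w‖ ^ 2 with hL
  have hzlow : ∀ t ∈ Set.Icc (3/4 : ℝ) 1, L ≤ g t := by
    intro t ht
    have ht1 : (3/4 : ℝ) ≤ t := ht.1
    have ht2 : t ≤ 1 := ht.2
    have hsplitv : t • a = z t + (-(1 - t)) • b := by
      rw [hz]; simp only [hw]; module
    have hnb : ‖(-(1 - t)) • b‖ = (1 - t) * ‖b‖ := by
      rw [norm_smul, Real.norm_eq_abs, abs_neg, abs_of_nonneg (by linarith : (0:ℝ) ≤ 1 - t)]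
    have hna : ‖t • a‖ = t * ‖a‖ := by
      rw [norm_smul, Real.norm_eq_abs, abs_of_nonneg (by linarith : (0:ℝ) ≤ t)]
    have hzta : t * ‖a‖ - (1 - t) * ‖b‖ ≤ ‖z t‖ := by
      have h2 : ‖t • a‖ ≤ ‖z t‖ + (1 - t) * ‖b‖ := by
        calc ‖t • a‖ = ‖z t + (-(1 - t)) • b‖ := by rw [hsplitv]
          _ ≤ ‖z t‖ + ‖(-(1 - t)) • b‖ := norm_add_le _ _
          _ = ‖z t‖ + (1 - t) * ‖b‖ := by rw [hnb]
      rw [hna] at h2; linarith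
    have hza : ‖a‖ / 2 ≤ ‖z t‖ := by
      have e1 := mul_le_mul_of_nonneg_left hba (show (0:ℝ) ≤ 1 - t by linarith)
      have e2 := mul_nonneg (show (0:ℝ) ≤ 2 * t - 3/2 by linarith) (norm_nonneg a)
      nlinarith
    have h1 : ‖a‖ ^ 2 / 4 ≤ ‖z t‖ ^ 2 := by
      have h := pow_le_pow_left₀ (by positivity : (0:ℝ) ≤ ‖a‖ / 2) hza 2
      linarith [h, sq_nonneg ‖a‖]
    have hkey : M ^ 2 / 24 ≤ ‖z t‖ ^ 2 + κ ^ 2 := by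
      rw [hM]
      nlinarith [norm_nonneg a, norm_nonneg b, sq_nonneg (‖a‖ - κ), sq_nonneg (‖a‖ - ‖b‖),
        mul_nonneg (norm_nonneg a) hκ, mul_nonneg (norm_nonneg b) hκ,
        mul_nonneg (norm_nonneg a) (norm_nonneg b)]
    have hrle : (M ^ 2 / 24) ^ q ≤ (‖z t‖ ^ 2 + κ ^ 2) ^ q :=
      Real.rpow_le_rpow (by positivity) hkey hq
    have heq : (M ^ 2 / 24) ^ q = (24:ℝ) ^ (-q) * M ^ (p - 2) := by
      rw [Real.div_rpow (by positivity) (by norm_num), Real.rpow_neg (by norm_num : (0:ℝ) ≤ 24)]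
      rw [← Real.rpow_natCast M 2, ← Real.rpow_mul hM0]
      rw [show ((2:ℕ) : ℝ) * q = p - 2 by push_cast [hqdef]; ring]
      ring
    have hfin : (24:ℝ) ^ (-q) * M ^ (p - 2) ≤ (‖z t‖ ^ 2 + κ ^ 2) ^ q := heq ▸ hrle
    show c⁻¹ * ((24:ℝ) ^ (-q) * M ^ (p - 2)) * ‖w‖ ^ 2 ≤
      c⁻¹ * (‖z t‖ ^ 2 + κ ^ 2) ^ q * ‖w‖ ^ 2
    gcongr
  have hsplit : (∫ t in (3/4:ℝ)..1, g t) ≤ ∫ t in (0:ℝ)..1, g t := by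
    have h1 : (∫ t in (0:ℝ)..(3/4), g t) + (∫ t in (3/4:ℝ)..1, g t) = ∫ t in (0:ℝ)..1, g t :=
      intervalIntegral.integral_add_adjacent_intervals (hgc.intervalIntegrable _ _)
        (hgc.intervalIntegrable _ _)
    have h2 : 0 ≤ ∫ t in (0:ℝ)..(3/4), g t :=
      intervalIntegral.integral_nonneg (by norm_num) (fun u _ => hgnn u)
    linarith
  have hconst : (1 - 3/4 : ℝ) * L ≤ ∫ t in (3/4:ℝ)..1, g t := by
    have h := intervalIntegral.integral_mono_on (μ := MeasureTheory.volume)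
      (by norm_num : (3/4:ℝ) ≤ 1)
      intervalIntegrable_const (hgc.intervalIntegrable _ _) hzlow
    rwa [intervalIntegral.integral_const, smul_eq_mul] at h
  calc c⁻¹ * (4:ℝ)⁻¹ * (24:ℝ) ^ (-q) * (M ^ (p - 2) * ‖w‖ ^ 2)
      = (1 - 3/4 : ℝ) * L := by rw [hL]; ring
    _ ≤ ∫ t in (3/4:ℝ)..1, g t := hconst
    _ ≤ ∫ t in (0:ℝ)..1, g t := hsplit
    _ ≤ ∫ t in (0:ℝ)..1, ⟪(fderiv ℝ A (z t)) w, w⟫ := hmono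
    _ = ⟪A a - A b, w⟫ := hswap.symm

open scoped RealInnerProductSpace in
lemma aux_key {n : ℕ} {p κ c γ : ℝ} (hp : 2 ≤ p) (hκ : 0 ≤ κ) (hc : 1 ≤ c)
    (hγ1 : 1/(p-1) ≤ γ) (hγ2 : γ ≤ 1)
    (A : EuclideanSpace ℝ (Fin n) → EuclideanSpace ℝ (Fin n)) (hA : ContDiff ℝ 1 A)
    (hell : ∀ z ζ : EuclideanSpace ℝ (Fin n),
      c⁻¹ * (‖z‖ ^ 2 + κ ^ 2) ^ ((p - 2) / 2) * ‖ζ‖ ^ 2 ≤ ⟪fderiv ℝ A z ζ, ζ⟫) :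
    ∃ C : ℝ, 0 < C ∧ ∀ a b : EuclideanSpace ℝ (Fin n),
      ‖((‖a‖ + κ) ^ (γ * p - γ - 1)) • a - ((‖b‖ + κ) ^ (γ * p - γ - 1)) • b‖ ^ (1/γ)
        ≤ C * ‖A a - A b‖ := by
  have hp1 : (0:ℝ) < p - 1 := by linarith
  have hγ0 : 0 < γ := lt_of_lt_of_le (by positivity) hγ1
  set δ : ℝ := γ * p - γ - 1 with hδdef
  have hδ : 0 ≤ δ := by
    have h1 : 1 ≤ γ * (p - 1) := by
      rw [div_le_iff₀ hp1] at hγ1; linarith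
    rw [hδdef]; nlinarith
  set q : ℝ := (p - 2) / 2 with hqdef
  set K : ℝ := c⁻¹ * (4:ℝ)⁻¹ * (24:ℝ) ^ (-q) with hKdef
  have hc0 : (0:ℝ) < c := by linarith
  have hK : 0 < K := by
    rw [hKdef]
    have : (0:ℝ) < (24:ℝ) ^ (-q) := Real.rpow_pos_of_pos (by norm_num) _
    positivity
  set c1 : ℝ := (2 * δ + 3) ^ (1/γ) with hc1def
  have hc1 : 0 < c1 := Real.rpow_pos_of_pos (by linarith) _
  refine ⟨c1 * K⁻¹, by positivity, fun a b => ?_⟩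
  by_cases hab : a = b
  · subst hab
    rw [sub_self, norm_zero, Real.zero_rpow (by positivity : 1/γ ≠ 0)]
    positivity
  · have hab0 : 0 < ‖a - b‖ := norm_sub_pos_iff.2 hab
    set r := ‖a - b‖ with hr
    set M := ‖a‖ + ‖b‖ + κ with hM
    have hrM : r ≤ M := by
      rw [hr, hM]
      have := norm_sub_le a b
      linarith
    have hMpos : 0 < M := lt_of_lt_of_le hab0 hrM
    set N := ‖A a - A b‖ with hN
    set X := M ^ (p - 2) with hX
    have hX0 : 0 ≤ X := Real.rpow_nonneg hMpos.le _
    -- Step B combined (symmetric in a, b)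
    have hInner : K * (X * r ^ 2) ≤ ⟪A a - A b, a - b⟫ := by
      rcases le_total ‖b‖ ‖a‖ with h | h
      · exact aux_stepB hp hκ hc A hA hell a b h
      · have h2 := aux_stepB hp hκ hc A hA hell b a h
        have e1 : ‖b‖ + ‖a‖ + κ = M := by rw [hM]; ring
        have e2 : ‖b - a‖ = r := by rw [hr, norm_sub_rev]
        rw [e1, e2] at h2
        have e3 : ⟪A b - A a, b - a⟫ = ⟪A a - A b, a - b⟫ := by
          rw [show A b - A a = -(A a - A b) by abel, show b - a = -(a - b) by abel,
            inner_neg_neg]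
        rwa [e3] at h2
    have hCS : ⟪A a - A b, a - b⟫ ≤ N * r := real_inner_le_norm _ _
    have h6 : K * X * r ≤ N := by
      have h5 : (K * X * r) * r ≤ N * r := by
        calc (K * X * r) * r = K * (X * r ^ 2) := by ring
          _ ≤ ⟪A a - A b, a - b⟫ := hInner
          _ ≤ N * r := hCS
      exact le_of_mul_le_mul_right h5 hab0
    have h7 : X * r ≤ K⁻¹ * N := by
      rw [show X * r = K⁻¹ * (K * X * r) by field_simp]
      exact mul_le_mul_of_nonneg_left h6 (by positivity)
    -- Step A + rpow manipulations
    have step1 := aux_stepA hκ hδ a b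
    have hγinv : (0:ℝ) < 1/γ := by positivity
    have hstep2 : ‖((‖a‖ + κ) ^ δ) • a - ((‖b‖ + κ) ^ δ) • b‖ ^ (1/γ) ≤
        ((2 * δ + 3) * M ^ δ * r) ^ (1/γ) :=
      Real.rpow_le_rpow (norm_nonneg _) step1 hγinv.le
    have hMδ0 : (0:ℝ) ≤ M ^ δ := Real.rpow_nonneg hMpos.le _
    have hexpand : ((2 * δ + 3) * M ^ δ * r) ^ (1/γ) =
        c1 * M ^ (δ * (1/γ)) * r ^ (1/γ) := by
      rw [Real.mul_rpow (by positivity : (0:ℝ) ≤ (2 * δ + 3) * M ^ δ) hab0.le,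
        Real.mul_rpow (by linarith : (0:ℝ) ≤ 2 * δ + 3) hMδ0,
        ← Real.rpow_mul hMpos.le, hc1def]
    have h1γ : 1 ≤ 1/γ := by rw [le_div_iff₀ hγ0]; linarith
    have hrstep : r ^ (1/γ) ≤ r * M ^ (1/γ - 1) := by
      have e0 : (1:ℝ) + (1/γ - 1) = 1/γ := by ring
      have e2 := Real.rpow_add hab0 1 (1/γ - 1)
      rw [e0, Real.rpow_one] at e2
      rw [e2]
      exact mul_le_mul_of_nonneg_left
        (Real.rpow_le_rpow hab0.le hrM (by linarith)) hab0.le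
    have hMexp : M ^ (δ * (1/γ)) * M ^ (1/γ - 1) = X := by
      rw [hX, ← Real.rpow_add hMpos]
      congr 1
      rw [hδdef]; field_simp
      ring
    calc ‖((‖a‖ + κ) ^ δ) • a - ((‖b‖ + κ) ^ δ) • b‖ ^ (1/γ)
        ≤ c1 * M ^ (δ * (1/γ)) * r ^ (1/γ) := by rw [← hexpand]; exact hstep2
      _ ≤ c1 * M ^ (δ * (1/γ)) * (r * M ^ (1/γ - 1)) :=
          mul_le_mul_of_nonneg_left hrstep (by positivity)
      _ = c1 * ((M ^ (δ * (1/γ)) * M ^ (1/γ - 1)) * r) := by ring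
      _ = c1 * (X * r) := by rw [hMexp]
      _ ≤ c1 * (K⁻¹ * N) := mul_le_mul_of_nonneg_left h7 hc1.le
      _ = c1 * K⁻¹ * N := by ring

/-- weighted Gagliardo-seminorm comparison: under the ellipticity condition
on `A`, with `E(ξ) = (|ξ| + κ)^(γp - γ - 1) ξ`, there is `C = C(p,γ,c) > 0` such that for
every measurable `v : Ω → ℝⁿ`,
`∫_Ω ∫_Ω d^α(x) d^β(y) |E(v(x)) - E(v(y))|^{1/γ} / |x-y|^{n+σ} dx dy
  ≤ C ∫_Ω ∫_Ω d^α(x) d^β(y) |A(v(x)) - A(v(y))| / |x-y|^{n+σ} dx dy`. -/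
theorem statement6 (n : ℕ) (hn : 2 ≤ n)
    (Ω : Set (EuclideanSpace ℝ (Fin n))) (hΩo : IsOpen Ω) (hΩb : Bornology.IsBounded Ω)
    (σ : ℝ) (hσ : σ ∈ Set.Ioo (0:ℝ) 1) (α β : ℝ) (hα : 0 ≤ α) (hβ : 0 ≤ β)
    (p κ c γ : ℝ) (hp : 2 ≤ p) (hκ : κ ∈ Set.Icc (0:ℝ) 1) (hc : 1 ≤ c)
    (hγ : γ ∈ Set.Icc (1/(p-1)) 1)
    (d : EuclideanSpace ℝ (Fin n) → ℝ)
    (hd : ∀ x, d x = Metric.infDist x (frontier Ω))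
    (E : EuclideanSpace ℝ (Fin n) → EuclideanSpace ℝ (Fin n))
    (hE : ∀ ξ : EuclideanSpace ℝ (Fin n), E ξ = ((‖ξ‖ + κ) ^ (γ * p - γ - 1)) • ξ)
    (A : EuclideanSpace ℝ (Fin n) → EuclideanSpace ℝ (Fin n))
    (hA : ContDiff ℝ 1 A)
    (hell : ∀ z ζ : EuclideanSpace ℝ (Fin n),
      c⁻¹ * (‖z‖ ^ 2 + κ ^ 2) ^ ((p - 2) / 2) * ‖ζ‖ ^ 2 ≤ ⟪fderiv ℝ A z ζ, ζ⟫) :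
    ∃ C : ℝ, 0 < C ∧
      ∀ v : EuclideanSpace ℝ (Fin n) → EuclideanSpace ℝ (Fin n), Measurable v →
      ∫⁻ x in Ω, ∫⁻ y in Ω,
          ENNReal.ofReal (d x ^ α * d y ^ β *
            (‖E (v x) - E (v y)‖ ^ (1/γ) / ‖x - y‖ ^ ((n : ℝ) + σ)))
        ≤ ENNReal.ofReal C *
          ∫⁻ x in Ω, ∫⁻ y in Ω,
            ENNReal.ofReal (d x ^ α * d y ^ β *
              (‖A (v x) - A (v y)‖ / ‖x - y‖ ^ ((n : ℝ) + σ))) := by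
  obtain ⟨C, hC, hkey⟩ := aux_key hp hκ.1 hc hγ.1 hγ.2 A hA hell
  refine ⟨C, hC, fun v hv => ?_⟩
  have hpt : ∀ x y : EuclideanSpace ℝ (Fin n),
      d x ^ α * d y ^ β * (‖E (v x) - E (v y)‖ ^ (1/γ) / ‖x - y‖ ^ ((n : ℝ) + σ))
        ≤ C * (d x ^ α * d y ^ β * (‖A (v x) - A (v y)‖ / ‖x - y‖ ^ ((n : ℝ) + σ))) := by
    intro x y
    have hdx : 0 ≤ d x ^ α := Real.rpow_nonneg (by rw [hd]; exact Metric.infDist_nonneg) _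
    have hdy : 0 ≤ d y ^ β := Real.rpow_nonneg (by rw [hd]; exact Metric.infDist_nonneg) _
    have hD : 0 ≤ (‖x - y‖ ^ ((n : ℝ) + σ))⁻¹ := by
      have := Real.rpow_nonneg (norm_nonneg (x - y)) ((n : ℝ) + σ)
      positivity
    have h1 : ‖E (v x) - E (v y)‖ ^ (1/γ) ≤ C * ‖A (v x) - A (v y)‖ := by
      rw [hE, hE]; exact hkey _ _
    have hP : 0 ≤ d x ^ α * d y ^ β * (‖x - y‖ ^ ((n : ℝ) + σ))⁻¹ := by positivity
    calc d x ^ α * d y ^ β * (‖E (v x) - E (v y)‖ ^ (1/γ) / ‖x - y‖ ^ ((n : ℝ) + σ))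
        = (d x ^ α * d y ^ β * (‖x - y‖ ^ ((n : ℝ) + σ))⁻¹) * ‖E (v x) - E (v y)‖ ^ (1/γ) := by
          rw [div_eq_mul_inv]; ring
      _ ≤ (d x ^ α * d y ^ β * (‖x - y‖ ^ ((n : ℝ) + σ))⁻¹) * (C * ‖A (v x) - A (v y)‖) :=
          mul_le_mul_of_nonneg_left h1 hP
      _ = C * (d x ^ α * d y ^ β * (‖A (v x) - A (v y)‖ / ‖x - y‖ ^ ((n : ℝ) + σ))) := by
          rw [div_eq_mul_inv]; ring
  calc ∫⁻ x in Ω, ∫⁻ y in Ω,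
        ENNReal.ofReal (d x ^ α * d y ^ β *
          (‖E (v x) - E (v y)‖ ^ (1/γ) / ‖x - y‖ ^ ((n : ℝ) + σ)))
      ≤ ∫⁻ x in Ω, ∫⁻ y in Ω,
        ENNReal.ofReal (C * (d x ^ α * d y ^ β *
          (‖A (v x) - A (v y)‖ / ‖x - y‖ ^ ((n : ℝ) + σ)))) :=
        lintegral_mono fun x => lintegral_mono fun y => ENNReal.ofReal_le_ofReal (hpt x y)
    _ = ∫⁻ x in Ω, ∫⁻ y in Ω, ENNReal.ofReal C * ENNReal.ofReal (d x ^ α * d y ^ β *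
          (‖A (v x) - A (v y)‖ / ‖x - y‖ ^ ((n : ℝ) + σ))) := by
        simp_rw [ENNReal.ofReal_mul hC.le]
    _ = ENNReal.ofReal C * ∫⁻ x in Ω, ∫⁻ y in Ω,
          ENNReal.ofReal (d x ^ α * d y ^ β *
            (‖A (v x) - A (v y)‖ / ‖x - y‖ ^ ((n : ℝ) + σ))) := by
        simp_rw [lintegral_const_mul' _ _ ENNReal.ofReal_ne_top]
end

section
/- Let n ≥ 2, let Ω ⊂ ℝⁿ be an open bounded set, σ ∈ (0,1), α, β ≥ 0, p ≥ 2, κ ∈ [0,1], c ≥ 1, and let A : ℝⁿ → ℝⁿ be continuously differentiable with ⟨∂_z A(z) ζ, ζ⟩ ≥ c^{−1} (|z|² + κ²)^{(p−2)/2} |ζ|². Then there is C = C(p, c) > 0 such that for every measurable v : Ω → ℝⁿ, ∫_Ω ∫_Ω d^α(x) d^β(y) |v(x) − v(y)|^{p−1} / |x−y|^{n+σ} dx dy ≤ C ∫_Ω ∫_Ω d^α(x) d^β(y) |A(v(x)) − A(v(y))| / |x−y|^{n+σ} dx dy; that is, [v]_{W_G^{σ/(p−1), p−1}(Ω;α,β)}^{p−1}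 ≤ C [A∘v]_{W_G^{σ,1}(Ω;α,β)}. (This is the case γ = 1/(p−1) of the paper's Theorem 1.3, in which E is the identity map.) -/
open MeasureTheory
open scoped ENNReal RealInnerProductSpace

open MeasureTheory
open scoped ENNReal RealInnerProductSpace

set_option maxHeartbeats 1000000 in
lemma statement7_key {n : ℕ} (p κ c : ℝ) (hp : 2 ≤ p) (hc : 1 ≤ c)
    (A : EuclideanSpace ℝ (Fin n) → EuclideanSpace ℝ (Fin n))
    (hA : ContDiff ℝ 1 A)
    (hell : ∀ z ζ : EuclideanSpace ℝ (Fin n),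
      c⁻¹ * (‖z‖ ^ 2 + κ ^ 2) ^ ((p - 2) / 2) * ‖ζ‖ ^ 2 ≤ ⟪fderiv ℝ A z ζ, ζ⟫)
    (z1 z2 : EuclideanSpace ℝ (Fin n)) :
    ‖z1 - z2‖ ^ (p - 1) ≤ c * (4:ℝ) ^ (p - 1) * ‖A z1 - A z2‖ := by
  have hc0 : (0:ℝ) < c := lt_of_lt_of_le one_pos hc
  set w := z1 - z2 with hwdef
  by_cases hw : w = 0
  · have : z1 = z2 := sub_eq_zero.mp hw
    rw [hw, this]
    simp only [norm_zero, sub_self]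
    rw [Real.zero_rpow (by linarith : p - 1 ≠ 0)]
    positivity
  have hw0 : 0 < ‖w‖ := norm_pos_iff.mpr hw
  set t₀ : ℝ := -⟪z2, w⟫ / ‖w‖ ^ 2 with ht₀
  -- distance bound along the segment
  have hdist : ∀ t : ℝ, |t - t₀| * ‖w‖ ≤ ‖z2 + t • w‖ := by
    intro t
    have hsq : ‖z2 + t • w‖ ^ 2 =
        ‖w‖ ^ 2 * (t - t₀) ^ 2 + (‖z2‖ ^ 2 - ⟪z2, w⟫ ^ 2 / ‖w‖ ^ 2) := by
      have h1 : ‖z2 + t • w‖ ^ 2 = ‖z2‖ ^ 2 + 2 * ⟪z2, t • w⟫ + ‖t • w‖ ^ 2 :=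
        norm_add_sq_real z2 (t • w)
      rw [h1, real_inner_smul_right, norm_smul, Real.norm_eq_abs, mul_pow, sq_abs, ht₀]
      have hne : (‖w‖:ℝ) ^ 2 ≠ 0 := by positivity
      field_simp
      ring
    have hcs : ⟪z2, w⟫ ^ 2 / ‖w‖ ^ 2 ≤ ‖z2‖ ^ 2 := by
      rw [div_le_iff₀ (by positivity)]
      have h := abs_real_inner_le_norm z2 w
      nlinarith [sq_abs ⟪z2, w⟫, abs_nonneg ⟪z2, w⟫, norm_nonneg z2, norm_nonneg w]
    have h2 : (|t - t₀| * ‖w‖) ^ 2 ≤ ‖z2 + t • w‖ ^ 2 := by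
      rw [hsq, mul_pow, sq_abs]
      nlinarith
    have := Real.sqrt_le_sqrt h2
    rwa [Real.sqrt_sq (by positivity), Real.sqrt_sq (norm_nonneg _)] at this
  -- the function g and its derivative
  set g : ℝ → ℝ := fun t => ⟪A (z2 + t • w), w⟫ with hg
  set g' : ℝ → ℝ := fun t => ⟪(fderiv ℝ A (z2 + t • w)) w, w⟫ with hg'
  have hderiv : ∀ t : ℝ, HasDerivAt g (g' t) t := by
    intro t
    have h1 : HasDerivAt (fun t : ℝ => z2 + t • w) w t := by
      simpa using ((hasDerivAt_id t).smul_const w).const_add z2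
    have h2 : HasFDerivAt A (fderiv ℝ A (z2 + t • w)) (z2 + t • w) :=
      (hA.differentiable one_ne_zero _).hasFDerivAt
    have h3 : HasDerivAt (fun t : ℝ => A (z2 + t • w)) ((fderiv ℝ A (z2 + t • w)) w) t :=
      h2.comp_hasDerivAt t h1
    have h4 := h3.inner ℝ (hasDerivAt_const t w)
    simpa using h4
  have hcont : Continuous g' := by
    have h1 : Continuous fun t : ℝ => z2 + t • w := by continuity
    have h2 : Continuous (fderiv ℝ A) := hA.continuous_fderiv one_ne_zero
    have h3 : Continuous fun t : ℝ => (fderiv ℝ A (z2 + t • w)) w :=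
      (ContinuousLinearMap.apply ℝ _ w).continuous.comp (h2.comp h1)
    exact h3.inner continuous_const
  have hnn : ∀ t : ℝ, 0 ≤ g' t := by
    intro t
    refine le_trans ?_ (hell (z2 + t • w) w)
    positivity
  -- FTC
  have hftc : ∫ t in (0:ℝ)..1, g' t = g 1 - g 0 :=
    intervalIntegral.integral_eq_sub_of_hasDerivAt (fun t _ => hderiv t)
      (hcont.intervalIntegrable 0 1)
  -- choose a subinterval away from t₀
  set a : ℝ := if t₀ ≤ 1/2 then 3/4 else 0 with ha
  have ha0 : 0 ≤ a := by rw [ha]; split_ifs <;> norm_num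
  have hab : a + 1/4 ≤ 1 := by rw [ha]; split_ifs <;> norm_num
  have hfar : ∀ t ∈ Set.Icc a (a + 1/4), (1:ℝ)/4 ≤ |t - t₀| := by
    intro t ht
    rw [ha] at ht
    split_ifs at ht with h
    · rw [abs_of_nonneg (by linarith [ht.1])]
      linarith [ht.1]
    · push_neg at h
      rw [abs_of_nonpos (by linarith [ht.2])]
      linarith [ht.2]
  set K : ℝ := c⁻¹ * (‖w‖ / 4) ^ (p - 2) * ‖w‖ ^ 2 with hK
  have hKpos : 0 < K := by
    rw [hK]
    have : (0:ℝ) < (‖w‖ / 4) ^ (p - 2) := Real.rpow_pos_of_pos (by positivity) _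
    positivity
  have hlow : ∀ t ∈ Set.Icc a (a + 1/4), K ≤ g' t := by
    intro t ht
    refine le_trans ?_ (hell (z2 + t • w) w)
    rw [hK]
    have hz : ‖w‖ / 4 ≤ ‖z2 + t • w‖ := by
      have := hdist t
      have h4 := hfar t ht
      calc ‖w‖ / 4 = (1/4) * ‖w‖ := by ring
        _ ≤ |t - t₀| * ‖w‖ := by
            exact mul_le_mul_of_nonneg_right h4 (norm_nonneg _)
        _ ≤ ‖z2 + t • w‖ := this
    have hrb : (‖w‖ / 4) ^ (p - 2) ≤ (‖z2 + t • w‖ ^ 2 + κ ^ 2) ^ ((p - 2) / 2) := by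
      have h1 : (‖w‖ / 4) ^ (p - 2) = ((‖w‖ / 4) ^ 2) ^ ((p - 2) / 2) := by
        rw [← Real.rpow_natCast (‖w‖/4) 2, ← Real.rpow_mul (by positivity)]
        congr 1; ring
      rw [h1]
      apply Real.rpow_le_rpow (by positivity) ?_ (by linarith)
      nlinarith [sq_nonneg κ, norm_nonneg (z2 + t • w)]
    have := mul_le_mul_of_nonneg_left hrb (by positivity : (0:ℝ) ≤ c⁻¹)
    exact mul_le_mul_of_nonneg_right this (by positivity)
  -- integral bounds
  have hint : (1/4 : ℝ) * K ≤ ∫ t in (0:ℝ)..1, g' t := by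
    have hsplit1 : ∫ t in (0:ℝ)..1, g' t =
        (∫ t in (0:ℝ)..a, g' t) + (∫ t in a..(a+1/4), g' t) + (∫ t in (a+1/4)..1, g' t) := by
      rw [intervalIntegral.integral_add_adjacent_intervals (hcont.intervalIntegrable _ _)
          (hcont.intervalIntegrable _ _),
        intervalIntegral.integral_add_adjacent_intervals (hcont.intervalIntegrable _ _)
          (hcont.intervalIntegrable _ _)]
    have h1 : 0 ≤ ∫ t in (0:ℝ)..a, g' t :=
      intervalIntegral.integral_nonneg ha0 (fun t _ => hnn t)
    have h2 : 0 ≤ ∫ t in (a+1/4)..1, g' t :=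
      intervalIntegral.integral_nonneg hab (fun t _ => hnn t)
    have h3 : (1/4:ℝ) * K ≤ ∫ t in a..(a+1/4), g' t := by
      have := intervalIntegral.integral_mono_on (by linarith : a ≤ a + 1/4)
        (intervalIntegrable_const (μ := volume) (c := K)) (hcont.intervalIntegrable _ _) hlow
      rwa [intervalIntegral.integral_const, smul_eq_mul, show a + 1/4 - a = 1/4 by ring] at this
    rw [hsplit1]; linarith
  -- combine
  have hinner : ⟪A z1 - A z2, w⟫ = g 1 - g 0 := by
    have e1 : z2 + (1:ℝ) • w = z1 := by rw [one_smul, hwdef]; abel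
    have e0 : z2 + (0:ℝ) • w = z2 := by simp
    rw [hg]
    simp only [e1, e0]
    rw [inner_sub_left]
  have hub : g 1 - g 0 ≤ ‖A z1 - A z2‖ * ‖w‖ := by
    rw [← hinner]
    exact real_inner_le_norm _ _
  have hmain : (1/4:ℝ) * K ≤ ‖A z1 - A z2‖ * ‖w‖ := by
    rw [← hftc] at hub; linarith
  -- algebra
  rw [hK] at hmain
  have hdr : (‖w‖ / 4) ^ (p - 2) = ‖w‖ ^ (p - 2) / (4:ℝ) ^ (p - 2) :=
    Real.div_rpow (norm_nonneg _) (by norm_num) (p - 2)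
  have h4p : (4:ℝ) ^ (p - 1) = (4:ℝ) ^ (p - 2) * 4 := by
    rw [show p - 1 = (p - 2) + 1 by ring, Real.rpow_add (by norm_num), Real.rpow_one]
  have hwp : ‖w‖ ^ (p - 1) = ‖w‖ ^ (p - 2) * ‖w‖ := by
    rw [show p - 1 = (p - 2) + 1 by ring, Real.rpow_add hw0, Real.rpow_one]
  rw [hdr] at hmain
  rw [h4p, hwp]
  have h4pos : (0:ℝ) < (4:ℝ) ^ (p - 2) := Real.rpow_pos_of_pos (by norm_num) _
  have hwp2 : (0:ℝ) < ‖w‖ ^ (p - 2) := Real.rpow_pos_of_pos hw0 _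
  set s := ‖w‖ ^ (p - 2)
  set Q := (4:ℝ) ^ (p - 2)
  set M := ‖A z1 - A z2‖
  set r := ‖w‖
  -- hmain : 1/4 * (c⁻¹ * (s / Q) * r^2) ≤ M * r ; goal : s * r ≤ c * (Q * 4) * M
  rw [inv_mul_eq_div] at hmain
  have hM : 0 ≤ M := norm_nonneg _
  have key : s * r * r ≤ 4 * c * Q * M * r := by
    have := mul_le_mul_of_nonneg_left hmain (by positivity : (0:ℝ) ≤ 4 * c * Q)
    calc s * r * r = 4 * c * Q * (1/4 * ((s/Q)/c * r^2)) := by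
          field_simp
      _ ≤ 4 * c * Q * (M * r) := this
      _ = 4 * c * Q * M * r := by ring
    
  have := le_of_mul_le_mul_right (by linarith [key] : s * r * r ≤ (4 * c * Q * M) * r) hw0
  linarith [this]

/-- the case `γ = 1/(p-1)` of the seminorm comparison: under the ellipticity
condition on `A`, there is `C = C(p,c) > 0` such that for every measurable `v : Ω → ℝⁿ`,
`∫_Ω ∫_Ω d^α(x) d^β(y) |v(x) - v(y)|^{p-1} / |x-y|^{n+σ} dx dy
  ≤ C ∫_Ω ∫_Ω d^α(x) d^β(y) |A(v(x)) - A(v(y))| / |x-y|^{n+σ} dx dy`. -/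
theorem statement7 (n : ℕ) (hn : 2 ≤ n)
    (Ω : Set (EuclideanSpace ℝ (Fin n))) (hΩo : IsOpen Ω) (hΩb : Bornology.IsBounded Ω)
    (σ : ℝ) (hσ : σ ∈ Set.Ioo (0:ℝ) 1) (α β : ℝ) (hα : 0 ≤ α) (hβ : 0 ≤ β)
    (p κ c : ℝ) (hp : 2 ≤ p) (hκ : κ ∈ Set.Icc (0:ℝ) 1) (hc : 1 ≤ c)
    (d : EuclideanSpace ℝ (Fin n) → ℝ)
    (hd : ∀ x, d x = Metric.infDist x (frontier Ω))
    (A : EuclideanSpace ℝ (Fin n) → EuclideanSpace ℝ (Fin n))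
    (hA : ContDiff ℝ 1 A)
    (hell : ∀ z ζ : EuclideanSpace ℝ (Fin n),
      c⁻¹ * (‖z‖ ^ 2 + κ ^ 2) ^ ((p - 2) / 2) * ‖ζ‖ ^ 2 ≤ ⟪fderiv ℝ A z ζ, ζ⟫) :
    ∃ C : ℝ, 0 < C ∧
      ∀ v : EuclideanSpace ℝ (Fin n) → EuclideanSpace ℝ (Fin n), Measurable v →
      ∫⁻ x in Ω, ∫⁻ y in Ω,
          ENNReal.ofReal (d x ^ α * d y ^ β *
            (‖v x - v y‖ ^ (p - 1) / ‖x - y‖ ^ ((n : ℝ) + σ)))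
        ≤ ENNReal.ofReal C *
          ∫⁻ x in Ω, ∫⁻ y in Ω,
            ENNReal.ofReal (d x ^ α * d y ^ β *
              (‖A (v x) - A (v y)‖ / ‖x - y‖ ^ ((n : ℝ) + σ))) := by
  have hc0 : (0:ℝ) < c := lt_of_lt_of_le one_pos hc
  refine ⟨c * (4:ℝ) ^ (p - 1), by positivity, ?_⟩
  intro v hv
  set C : ℝ := c * (4:ℝ) ^ (p - 1) with hCdef
  have hC0 : 0 < C := by positivity
  have hkey := statement7_key p κ c hp hc A hA hell
  have hpt : ∀ x y : EuclideanSpace ℝ (Fin n),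
      d x ^ α * d y ^ β * (‖v x - v y‖ ^ (p - 1) / ‖x - y‖ ^ ((n : ℝ) + σ))
        ≤ C * (d x ^ α * d y ^ β * (‖A (v x) - A (v y)‖ / ‖x - y‖ ^ ((n : ℝ) + σ))) := by
    intro x y
    have hdx : 0 ≤ d x ^ α := by
      rw [hd]; exact Real.rpow_nonneg Metric.infDist_nonneg _
    have hdy : 0 ≤ d y ^ β := by
      rw [hd]; exact Real.rpow_nonneg Metric.infDist_nonneg _
    have hD : 0 ≤ ‖x - y‖ ^ ((n : ℝ) + σ) := Real.rpow_nonneg (norm_nonneg _) _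
    have hk := hkey (v x) (v y)
    have hND : ‖v x - v y‖ ^ (p - 1) / ‖x - y‖ ^ ((n : ℝ) + σ)
        ≤ C * (‖A (v x) - A (v y)‖ / ‖x - y‖ ^ ((n : ℝ) + σ)) := by
      rcases eq_or_lt_of_le hD with hD0 | hD0
      · rw [← hD0]
        simp
      · rw [← mul_div_assoc]
        exact (div_le_div_iff_of_pos_right hD0).mpr hk
    calc d x ^ α * d y ^ β * (‖v x - v y‖ ^ (p - 1) / ‖x - y‖ ^ ((n : ℝ) + σ))
        ≤ d x ^ α * d y ^ β * (C * (‖A (v x) - A (v y)‖ / ‖x - y‖ ^ ((n : ℝ) + σ))) :=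
          mul_le_mul_of_nonneg_left hND (by positivity)
      _ = C * (d x ^ α * d y ^ β * (‖A (v x) - A (v y)‖ / ‖x - y‖ ^ ((n : ℝ) + σ))) := by ring
  calc ∫⁻ x in Ω, ∫⁻ y in Ω,
          ENNReal.ofReal (d x ^ α * d y ^ β *
            (‖v x - v y‖ ^ (p - 1) / ‖x - y‖ ^ ((n : ℝ) + σ)))
      ≤ ∫⁻ x in Ω, ∫⁻ y in Ω,
          ENNReal.ofReal C * ENNReal.ofReal (d x ^ α * d y ^ β *
            (‖A (v x) - A (v y)‖ / ‖x - y‖ ^ ((n : ℝ) + σ))) := by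
        refine lintegral_mono fun x => lintegral_mono fun y => ?_
        rw [← ENNReal.ofReal_mul hC0.le]
        exact ENNReal.ofReal_le_ofReal (hpt x y)
    _ = ENNReal.ofReal C * ∫⁻ x in Ω, ∫⁻ y in Ω,
          ENNReal.ofReal (d x ^ α * d y ^ β *
            (‖A (v x) - A (v y)‖ / ‖x - y‖ ^ ((n : ℝ) + σ))) := by
        rw [← lintegral_const_mul' _ _ ENNReal.ofReal_ne_top]
        refine lintegral_congr fun x => ?_
        rw [← lintegral_const_mul' _ _ ENNReal.ofReal_ne_top]
end

section
/- Let n ≥ 2, let Ω ⊂ ℝⁿ be an open bounded set, σ ∈ (0,1), α, β ≥ 0, R₀ > 0, and let r_k = 2^{−k} R₀ with layers Ω_k = {x ∈ Ω : r_{k+1} < d(x) ≤ r_k}. Then there is a constant C = C(n, σ) > 0 such that for every F ∈ L¹(Ω) and all integers j, k ≥ 1 with |k − j| ≥ 2, ∫_{Ω_k} ∫_{Ω_j} d^α(x) d^β(y) |F(x)| / |x − y|^{n+σ} dy dx ≤ C r_k^α r_j^β (r_k + r_j)^{−σ} ∫_{Ω_k} |F(x)| dx. -/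
open MeasureTheory Metric
open scoped ENNReal

private lemma tailBound (n : ℕ) (hn : 1 ≤ n) (σ : ℝ) (hσ0 : 0 < σ) :
    ∃ C : ℝ, 0 < C ∧ ∀ (x : EuclideanSpace ℝ (Fin n)) (R : ℝ), 0 < R →
      ∫⁻ y in {y | R ≤ dist y x}, ENNReal.ofReal (‖x - y‖ ^ (-((n:ℝ) + σ)))
        ≤ ENNReal.ofReal (C * R ^ (-σ)) := by
  haveI : Nontrivial (EuclideanSpace ℝ (Fin n)) := by
    refine ⟨EuclideanSpace.single (⟨0, by omega⟩ : Fin n) (1:ℝ), 0, fun h => ?_⟩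
    have := congrArg (fun v : EuclideanSpace ℝ (Fin n) => v (⟨0, by omega⟩ : Fin n)) h
    simp [EuclideanSpace.single_apply] at this
  set E := EuclideanSpace ℝ (Fin n)
  set B : ℝ≥0∞ := volume (ball (0:E) 1) with hB
  have hBfin : B ≠ ∞ := measure_ball_lt_top.ne
  have hq0 : (0:ℝ) ≤ (2:ℝ) ^ (-σ) := Real.rpow_nonneg (by norm_num) _
  set q : ℝ≥0∞ := ENNReal.ofReal ((2:ℝ) ^ (-σ)) with hqdef
  have hqlt : q < 1 := by
    rw [hqdef, ENNReal.ofReal_lt_one]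
    exact Real.rpow_lt_one_of_one_lt_of_neg one_lt_two (neg_neg_of_pos hσ0)
  have hinv : (1 - q)⁻¹ ≠ ∞ := ENNReal.inv_ne_top.2 (tsub_pos_of_lt hqlt).ne'
  set K : ℝ≥0∞ := ENNReal.ofReal ((2:ℝ) ^ ((n:ℝ))) * B * (1 - q)⁻¹ with hKdef
  have hKfin : K ≠ ∞ :=
    ENNReal.mul_ne_top (ENNReal.mul_ne_top ENNReal.ofReal_ne_top hBfin) hinv
  refine ⟨K.toReal + 1, by positivity, fun x R hR => ?_⟩
  set A : ℕ → Set E := fun m => (ball x ((2:ℝ)^m * R))ᶜ ∩ ball x ((2:ℝ)^(m+1) * R)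
    with hAdef
  have hcov : {y : E | R ≤ dist y x} ⊆ ⋃ m, A m := by
    intro y hy
    simp only [Set.mem_setOf_eq] at hy
    have ht : 0 < dist y x / R := div_pos (lt_of_lt_of_le hR hy) hR
    obtain ⟨i, hi1, hi2⟩ := exists_mem_Ico_zpow ht one_lt_two
    have hi0 : 0 ≤ i := by
      by_contra h
      push_neg at h
      have h1 : (1:ℝ) ≤ dist y x / R := (one_le_div hR).2 hy
      have h2 : (2:ℝ) ^ (i+1) ≤ (2:ℝ) ^ (0:ℤ) :=
        zpow_le_zpow_right₀ one_le_two (by omega)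
      simp only [zpow_zero] at h2
      linarith [hi2]
    refine Set.mem_iUnion.2 ⟨i.toNat, ?_, ?_⟩
    · simp only [Set.mem_compl_iff, mem_ball, not_lt]
      have he : ((2:ℝ) ^ (i.toNat) : ℝ) = (2:ℝ) ^ i := by
        rw [← zpow_natCast]; congr 1; omega
      rw [he]
      calc (2:ℝ) ^ i * R ≤ dist y x / R * R :=
            mul_le_mul_of_nonneg_right hi1 hR.le
        _ = dist y x := by field_simp
    · simp only [mem_ball]
      have he : ((2:ℝ) ^ (i.toNat + 1) : ℝ) = (2:ℝ) ^ (i+1) := by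
        rw [← zpow_natCast]; congr 1; omega
      rw [he]
      calc dist y x = dist y x / R * R := by field_simp
        _ < (2:ℝ) ^ (i+1) * R := mul_lt_mul_of_pos_right hi2 hR
  have key : ∀ m : ℕ, ((2:ℝ)^m * R) ^ (-((n:ℝ)+σ)) * ((2:ℝ)^(m+1) * R) ^ ((n:ℝ))
      = (2:ℝ)^((n:ℝ)) * ((2:ℝ)^(-σ))^m * R^(-σ) := by
    intro m
    set t : ℝ := (2:ℝ)^m * R with hts
    have ht : 0 < t := by positivity
    have e1 : t ^ (-((n:ℝ)+σ)) = t ^ (-(n:ℝ)) * t ^ (-σ) := by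
      rw [← Real.rpow_add ht]; ring_nf
    have e2 : ((2:ℝ)^(m+1) * R) ^ ((n:ℝ)) = (2:ℝ)^((n:ℝ)) * t ^ ((n:ℝ)) := by
      rw [show (2:ℝ)^(m+1) * R = 2 * t by rw [hts]; ring,
        Real.mul_rpow (by norm_num) ht.le]
    have e3 : t ^ (-(n:ℝ)) * t ^ ((n:ℝ)) = 1 := by
      rw [← Real.rpow_add ht]; simp
    have e4 : t ^ (-σ) = ((2:ℝ)^(-σ))^m * R^(-σ) := by
      rw [hts, Real.mul_rpow (by positivity) hR.le, ← Real.rpow_natCast (2:ℝ) m,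
        ← Real.rpow_mul (by norm_num), mul_comm (m:ℝ) (-σ),
        Real.rpow_mul (by norm_num), Real.rpow_natCast]
    rw [e1, e2, e4]
    linear_combination ((2:ℝ)^((n:ℝ)) * (((2:ℝ)^(-σ))^m * R^(-σ))) * e3
  have hAm : ∀ m : ℕ, ∫⁻ y in A m, ENNReal.ofReal (‖x - y‖ ^ (-((n:ℝ)+σ)))
      ≤ (ENNReal.ofReal ((2:ℝ)^((n:ℝ))) * B * ENNReal.ofReal (R ^ (-σ))) * q ^ m := by
    intro m
    have hmA : MeasurableSet (A m) :=
      (measurableSet_ball.compl).inter measurableSet_ball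
    have hpos : (0:ℝ) < (2:ℝ)^m * R := by positivity
    have step1 : ∫⁻ y in A m, ENNReal.ofReal (‖x - y‖ ^ (-((n:ℝ)+σ)))
        ≤ ∫⁻ _ in A m, ENNReal.ofReal (((2:ℝ)^m * R) ^ (-((n:ℝ)+σ))) := by
      refine setLIntegral_mono' hmA fun y hy => ?_
      have h1 : (2:ℝ)^m * R ≤ ‖x - y‖ := by
        have h2 := hy.1
        simp only [Set.mem_compl_iff, mem_ball, not_lt] at h2
        rwa [← dist_eq_norm, dist_comm]
      refine ENNReal.ofReal_le_ofReal
        (Real.rpow_le_rpow_of_nonpos hpos h1 ?_)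
      have : (0:ℝ) ≤ (n:ℝ) + σ := by positivity
      linarith
    have step2 : (∫⁻ _ in A m, ENNReal.ofReal (((2:ℝ)^m * R) ^ (-((n:ℝ)+σ))) :
          ℝ≥0∞)
        = ENNReal.ofReal (((2:ℝ)^m * R) ^ (-((n:ℝ)+σ))) * volume (A m) :=
      setLIntegral_const _ _
    have step3 : volume (A m) ≤ ENNReal.ofReal (((2:ℝ)^(m+1) * R) ^ ((n:ℝ))) * B := by
      have hsub : A m ⊆ ball x ((2:ℝ)^(m+1) * R) := Set.inter_subset_right
      have hball : volume (ball x ((2:ℝ)^(m+1) * R))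
          = ENNReal.ofReal (((2:ℝ)^(m+1) * R) ^ ((n:ℝ))) * B := by
        rw [Measure.addHaar_ball (volume : Measure E) x
          (by positivity : (0:ℝ) ≤ (2:ℝ)^(m+1) * R)]
        rw [show Module.finrank ℝ E = n from finrank_euclideanSpace_fin]
        congr 2
        exact (Real.rpow_natCast _ n).symm
      calc volume (A m) ≤ volume (ball x ((2:ℝ)^(m+1) * R)) := measure_mono hsub
        _ = _ := hball
    calc ∫⁻ y in A m, ENNReal.ofReal (‖x - y‖ ^ (-((n:ℝ)+σ)))
        ≤ ENNReal.ofReal (((2:ℝ)^m * R) ^ (-((n:ℝ)+σ))) * volume (A m) := by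
          rw [← step2]; exact step1
      _ ≤ ENNReal.ofReal (((2:ℝ)^m * R) ^ (-((n:ℝ)+σ)))
            * (ENNReal.ofReal (((2:ℝ)^(m+1) * R) ^ ((n:ℝ))) * B) :=
          mul_le_mul_right step3 _
      _ = ENNReal.ofReal (((2:ℝ)^m * R) ^ (-((n:ℝ)+σ)) * ((2:ℝ)^(m+1) * R) ^ ((n:ℝ)))
            * B := by
          rw [ENNReal.ofReal_mul (by positivity)]; ring
      _ = (ENNReal.ofReal ((2:ℝ)^((n:ℝ))) * B * ENNReal.ofReal (R ^ (-σ))) * q ^ m := by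
          rw [key m, ENNReal.ofReal_mul (by positivity),
            ENNReal.ofReal_mul (by positivity), hqdef,
            ← ENNReal.ofReal_pow hq0]
          ring
  calc ∫⁻ y in {y | R ≤ dist y x}, ENNReal.ofReal (‖x - y‖ ^ (-((n:ℝ) + σ)))
      ≤ ∫⁻ y in ⋃ m, A m, ENNReal.ofReal (‖x - y‖ ^ (-((n:ℝ) + σ))) :=
        lintegral_mono_set hcov
    _ ≤ ∑' m, ∫⁻ y in A m, ENNReal.ofReal (‖x - y‖ ^ (-((n:ℝ) + σ))) :=
        lintegral_iUnion_le _ _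
    _ ≤ ∑' m, (ENNReal.ofReal ((2:ℝ)^((n:ℝ))) * B * ENNReal.ofReal (R ^ (-σ))) * q ^ m :=
        ENNReal.tsum_le_tsum hAm
    _ = (ENNReal.ofReal ((2:ℝ)^((n:ℝ))) * B * ENNReal.ofReal (R ^ (-σ))) * (1 - q)⁻¹ := by
        rw [ENNReal.tsum_mul_left, ENNReal.tsum_geometric]
    _ = K * ENNReal.ofReal (R ^ (-σ)) := by rw [hKdef]; ring
    _ ≤ ENNReal.ofReal ((K.toReal + 1) * R ^ (-σ)) := by
        rw [ENNReal.ofReal_mul (by positivity)]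
        refine mul_le_mul_left ?_ _
        calc K = ENNReal.ofReal K.toReal := (ENNReal.ofReal_toReal hKfin).symm
          _ ≤ ENNReal.ofReal (K.toReal + 1) :=
              ENNReal.ofReal_le_ofReal (by linarith)

/-- With `r_k = 2^{-k} R₀` and layers `Ω_k = {x ∈ Ω : r_{k+1} < d(x) ≤ r_k}`,
there is `C = C(n,σ) > 0` such that for every `F ∈ L¹(Ω)` and all integers `j, k ≥ 1` with
`|k - j| ≥ 2`,
`∫_{Ω_k} ∫_{Ω_j} d^α(x) d^β(y) |F(x)| / |x-y|^{n+σ} dy dx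
  ≤ C r_k^α r_j^β (r_k + r_j)^{-σ} ∫_{Ω_k} |F(x)| dx`. -/
theorem statement11 (n : ℕ) (hn : 2 ≤ n)
    (Ω : Set (EuclideanSpace ℝ (Fin n))) (hΩo : IsOpen Ω) (hΩb : Bornology.IsBounded Ω)
    (σ : ℝ) (hσ : σ ∈ Set.Ioo (0:ℝ) 1) (α β : ℝ) (hα : 0 ≤ α) (hβ : 0 ≤ β)
    (R₀ : ℝ) (hR₀ : 0 < R₀) (r : ℕ → ℝ) (hr : ∀ k, r k = R₀ / 2 ^ k)
    (d : EuclideanSpace ℝ (Fin n) → ℝ)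
    (hd : ∀ x, d x = Metric.infDist x (frontier Ω))
    (Ωl : ℕ → Set (EuclideanSpace ℝ (Fin n)))
    (hΩl : ∀ k, Ωl k = {x ∈ Ω | r (k + 1) < d x ∧ d x ≤ r k}) :
    ∃ C : ℝ, 0 < C ∧ ∀ F : EuclideanSpace ℝ (Fin n) → ℝ, IntegrableOn F Ω →
      ∀ j k : ℕ, 1 ≤ j → 1 ≤ k → 2 ≤ ((k : ℤ) - (j : ℤ)).natAbs →
      ∫⁻ x in Ωl k, ∫⁻ y in Ωl j,
          ENNReal.ofReal (d x ^ α * d y ^ β * (|F x| / ‖x - y‖ ^ ((n : ℝ) + σ)))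
        ≤ ENNReal.ofReal (C * r k ^ α * r j ^ β * (r k + r j) ^ (-σ) *
            ∫ x in Ωl k, |F x|) := by
  obtain ⟨C₀, hC₀, htail⟩ := tailBound n (by omega) σ hσ.1
  refine ⟨C₀ * 8 ^ σ, by positivity, fun F hF j k hj hk hjk => ?_⟩
  have hrpos : ∀ m, 0 < r m := fun m => by rw [hr]; positivity
  have hrle : ∀ a b : ℕ, a ≤ b → r b ≤ r a := fun a b hab => by
    rw [hr, hr, div_le_div_iff₀ (by positivity) (by positivity)]
    have h2 : (2:ℝ)^a ≤ (2:ℝ)^b := by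
      gcongr <;> first | norm_num | exact hab
    exact mul_le_mul_of_nonneg_left h2 hR₀.le
  have hdnn : ∀ x, 0 ≤ d x := fun x => by rw [hd]; exact Metric.infDist_nonneg
  have hlip : ∀ x y, d x ≤ d y + dist x y := fun x y => by
    rw [hd, hd]; exact Metric.infDist_le_infDist_add_dist
  have hmeas : ∀ m, MeasurableSet (Ωl m) := by
    intro m
    rw [hΩl]
    have hdc : Continuous d := by
      have : d = fun x => Metric.infDist x (frontier Ω) := funext hd
      rw [this]
      exact Metric.continuous_infDist_pt _
    exact hΩo.measurableSet.inter
      ((isOpen_lt continuous_const hdc).measurableSet.inter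
        (isClosed_le hdc continuous_const).measurableSet)
  set R : ℝ := (r k + r j) / 8 with hRdef
  have hRpos : 0 < R := by
    have h1 := hrpos k; have h2 := hrpos j
    rw [hRdef]; positivity
  have half : ∀ m : ℕ, r (m+1) = r m / 2 := fun m => by
    rw [hr, hr, pow_succ]; ring
  have quarter : ∀ m : ℕ, r (m+2) = r m / 4 := fun m => by
    rw [hr, hr, pow_add]; norm_num; ring
  have hsep : ∀ x ∈ Ωl k, ∀ y ∈ Ωl j, R ≤ dist y x := by
    intro x hx y hy
    rw [hΩl] at hx hy
    obtain ⟨-, hx1, hx2⟩ := hx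
    obtain ⟨-, hy1, hy2⟩ := hy
    rcases (by omega : k + 2 ≤ j ∨ j + 2 ≤ k) with hc | hc
    · -- d y small, d x comparatively large
      have h1 : d y ≤ r k / 4 := by
        have := hrle (k+2) j hc
        rw [quarter k] at this
        linarith
      have h2 : r k / 2 < d x := by rw [half k] at hx1; exact hx1
      have h3 : d x - d y ≤ dist x y := by linarith [hlip x y]
      have h4 : R ≤ r k / 4 := by
        have := hrle k j (by omega)
        rw [hRdef]; linarith
      rw [dist_comm]
      linarith
    · have h1 : d x ≤ r j / 4 := by
        have := hrle (j+2) k hc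
        rw [quarter j] at this
        linarith
      have h2 : r j / 2 < d y := by rw [half j] at hy1; exact hy1
      have h3 : d y - d x ≤ dist y x := by linarith [hlip y x]
      have h4 : R ≤ r j / 4 := by
        have := hrle j k (by omega)
        rw [hRdef]; linarith
      linarith
  have hsub : ∀ m, Ωl m ⊆ Ω := fun m => by
    rw [hΩl]; exact fun x hx => hx.1
  have hFint : Integrable (fun x => |F x|) (volume.restrict (Ωl k)) :=
    (hF.mono_set (hsub k)).abs
  set c : ℝ := r k ^ α * r j ^ β * (C₀ * R ^ (-σ)) with hcdef
  have hc0 : 0 ≤ c := by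
    have h1 := hrpos k; have h2 := hrpos j
    rw [hcdef]; positivity
  have inner : ∀ x ∈ Ωl k,
      (∫⁻ y in Ωl j,
        ENNReal.ofReal (d x ^ α * d y ^ β * (|F x| / ‖x - y‖ ^ ((n:ℝ)+σ))))
      ≤ ENNReal.ofReal (c * |F x|) := by
    intro x hx
    have hxk : d x ≤ r k := by
      rw [hΩl] at hx; exact hx.2.2
    calc ∫⁻ y in Ωl j,
          ENNReal.ofReal (d x ^ α * d y ^ β * (|F x| / ‖x - y‖ ^ ((n:ℝ)+σ)))
        ≤ ∫⁻ y in Ωl j, ENNReal.ofReal (r k ^ α * r j ^ β * |F x|)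
            * ENNReal.ofReal (‖x - y‖ ^ (-((n:ℝ)+σ))) := by
          refine setLIntegral_mono' (hmeas j) fun y hy => ?_
          have hyj : d y ≤ r j := by
            rw [hΩl] at hy; exact hy.2.2
          rw [← ENNReal.ofReal_mul
            (mul_nonneg (mul_nonneg (Real.rpow_nonneg (hrpos k).le α)
              (Real.rpow_nonneg (hrpos j).le β)) (abs_nonneg _))]
          refine ENNReal.ofReal_le_ofReal ?_
          have hdiv : |F x| / ‖x - y‖ ^ ((n:ℝ)+σ)
              = |F x| * ‖x - y‖ ^ (-((n:ℝ)+σ)) := by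
            rw [Real.rpow_neg (norm_nonneg _), div_eq_mul_inv]
          rw [hdiv, mul_assoc]
          have hxa : d x ^ α ≤ r k ^ α := Real.rpow_le_rpow (hdnn x) hxk hα
          have hyb : d y ^ β ≤ r j ^ β := Real.rpow_le_rpow (hdnn y) hyj hβ
          have h1 : d x ^ α * (d y ^ β * (|F x| * ‖x - y‖ ^ (-((n:ℝ)+σ))))
              ≤ r k ^ α * (r j ^ β * (|F x| * ‖x - y‖ ^ (-((n:ℝ)+σ)))) := by
            gcongr
            · exact mul_nonneg (Real.rpow_nonneg (hdnn y) β)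
                (mul_nonneg (abs_nonneg _) (Real.rpow_nonneg (norm_nonneg _) _))
            · exact Real.rpow_nonneg (hrpos k).le α
          calc d x ^ α * (d y ^ β * (|F x| * ‖x - y‖ ^ (-((n:ℝ)+σ))))
              ≤ r k ^ α * (r j ^ β * (|F x| * ‖x - y‖ ^ (-((n:ℝ)+σ)))) := h1
            _ = r k ^ α * r j ^ β * |F x| * ‖x - y‖ ^ (-((n:ℝ)+σ)) := by ring
      _ = ENNReal.ofReal (r k ^ α * r j ^ β * |F x|)
            * ∫⁻ y in Ωl j, ENNReal.ofReal (‖x - y‖ ^ (-((n:ℝ)+σ))) :=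
          lintegral_const_mul' _ _ ENNReal.ofReal_ne_top
      _ ≤ ENNReal.ofReal (r k ^ α * r j ^ β * |F x|)
            * ENNReal.ofReal (C₀ * R ^ (-σ)) := by
          refine mul_le_mul_right ?_ _
          exact le_trans (lintegral_mono_set fun y hy => hsep x hx y hy)
            (htail x R hRpos)
      _ = ENNReal.ofReal (c * |F x|) := by
          rw [← ENNReal.ofReal_mul
            (mul_nonneg (mul_nonneg (Real.rpow_nonneg (hrpos k).le α)
              (Real.rpow_nonneg (hrpos j).le β)) (abs_nonneg _)), hcdef]
          congr 1
          ring
  calc ∫⁻ x in Ωl k, ∫⁻ y in Ωl j,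
        ENNReal.ofReal (d x ^ α * d y ^ β * (|F x| / ‖x - y‖ ^ ((n:ℝ)+σ)))
      ≤ ∫⁻ x in Ωl k, ENNReal.ofReal (c * |F x|) :=
        setLIntegral_mono' (hmeas k) inner
    _ = ∫⁻ x in Ωl k, ENNReal.ofReal c * ENNReal.ofReal (|F x|) :=
        lintegral_congr fun x => by rw [← ENNReal.ofReal_mul hc0]
    _ = ENNReal.ofReal c * ∫⁻ x in Ωl k, ENNReal.ofReal (|F x|) :=
        lintegral_const_mul' _ _ ENNReal.ofReal_ne_top
    _ = ENNReal.ofReal c * ENNReal.ofReal (∫ x in Ωl k, |F x|) := by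
        rw [ofReal_integral_eq_lintegral_ofReal hFint
          (Filter.Eventually.of_forall fun x => abs_nonneg _)]
    _ = ENNReal.ofReal (c * ∫ x in Ωl k, |F x|) :=
        (ENNReal.ofReal_mul hc0).symm
    _ = ENNReal.ofReal (C₀ * 8 ^ σ * r k ^ α * r j ^ β * (r k + r j) ^ (-σ) *
          ∫ x in Ωl k, |F x|) := by
        congr 1
        have hRσ : R ^ (-σ) = (r k + r j) ^ (-σ) * 8 ^ σ := by
          rw [hRdef,
            Real.div_rpow (by linarith [hrpos k, hrpos j]) (by norm_num),
            Real.rpow_neg (by norm_num : (0:ℝ) ≤ 8), div_inv_eq_mul]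
        rw [hcdef, hRσ]
        ring
end

section
/- Let n ≥ 2, let Ω ⊂ ℝⁿ be an open bounded set, σ ∈ (0,1), α, β > 0 with α + β > σ, R₀ > 0, and let r_k = 2^{−k} R₀ with layers Ω_k = {x ∈ Ω : r_{k+1} < d(x) ≤ r_k} and Ω₀ = {x ∈ Ω : 0 < d(x) ≤ R₀/2}. Then there is a constant C = C(n, σ, α, β) > 0 such that for every F ∈ L¹(Ω; ℝⁿ), ∑_{k,j ≥ 1, |k−j| ≥ 2} ∫_{Ω_k} ∫_{Ω_j} d^α(x) d^β(y) |F(x) − F(y)| / |x − y|^{n+σ} dx dy ≤ C R₀^{α+β−σ} ∫_{Ω₀} |F(x)| dx. -/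
open MeasureTheory Real Metric Module
open scoped ENNReal

private lemma aux_radial (n : ℕ) (p : ℝ) (hp : (n : ℝ) < p) :
    ∃ K : ℝ≥0∞, K ≠ ∞ ∧ ∀ (ρ : ℝ), 0 < ρ → ∀ z : EuclideanSpace ℝ (Fin n),
      ∫⁻ y in {y | ρ ≤ ‖y - z‖}, ENNReal.ofReal (‖y - z‖ ^ (-p))
        ≤ K * ENNReal.ofReal (ρ ^ ((n : ℝ) - p)) := by
  set E := EuclideanSpace ℝ (Fin n)
  have hfin : (finrank ℝ E : ℝ) < p := by rw [finrank_euclideanSpace_fin]; exact hp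
  have hp0 : 0 < p := lt_of_le_of_lt (Nat.cast_nonneg n) hp
  set I := ∫⁻ w : E, ENNReal.ofReal ((1 + ‖w‖) ^ (-p)) with hI
  have hIfin : I ≠ ∞ := (finite_integral_one_add_norm hfin).ne
  refine ⟨ENNReal.ofReal (2 ^ p) * I, ENNReal.mul_ne_top ENNReal.ofReal_ne_top hIfin, ?_⟩
  intro ρ hρ z
  have hmeasS : MeasurableSet {y : E | ρ ≤ ‖y - z‖} :=
    measurableSet_le measurable_const (by fun_prop)
  have hg0 : Measurable fun w : E => ENNReal.ofReal ((1 + ‖w‖) ^ (-p)) := by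
    apply Measurable.ennreal_ofReal
    apply Continuous.measurable
    exact (continuous_const.add continuous_norm).rpow_const (fun x : E => Or.inl (by positivity : (1:ℝ) + ‖x‖ ≠ 0))
  -- step 1: rewrite as translated integral
  have step1 : ∫⁻ y in {y : E | ρ ≤ ‖y - z‖}, ENNReal.ofReal (‖y - z‖ ^ (-p))
      = ∫⁻ v, ({v : E | ρ ≤ ‖v‖}.indicator (fun v => ENNReal.ofReal (‖v‖ ^ (-p)))) v := by
    rw [← lintegral_indicator hmeasS]
    have : ∀ y : E, ({y : E | ρ ≤ ‖y - z‖}.indicator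
          (fun y => ENNReal.ofReal (‖y - z‖ ^ (-p)))) y
        = ({v : E | ρ ≤ ‖v‖}.indicator (fun v => ENNReal.ofReal (‖v‖ ^ (-p)))) (y + (-z)) := by
      intro y
      simp only [Set.indicator, Set.mem_setOf_eq, ← sub_eq_add_neg]
    simp_rw [this]
    exact lintegral_add_right_eq_self _ (-z)
  rw [step1]
  -- step 2: pointwise bound
  have step2 : ∀ v : E, ({v : E | ρ ≤ ‖v‖}.indicator (fun v => ENNReal.ofReal (‖v‖ ^ (-p)))) v
      ≤ ENNReal.ofReal ((2 / ρ) ^ p) * ENNReal.ofReal ((1 + ‖ρ⁻¹ • v‖) ^ (-p)) := by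
    intro v
    rcases le_or_gt ρ ‖v‖ with hv | hv
    · rw [Set.indicator_of_mem (show v ∈ {v : E | ρ ≤ ‖v‖} from hv)]
      rw [← ENNReal.ofReal_mul (by positivity)]
      apply ENNReal.ofReal_le_ofReal
      have hv0 : 0 < ‖v‖ := lt_of_lt_of_le hρ hv
      have hnv : ‖ρ⁻¹ • v‖ = ‖v‖ / ρ := by
        rw [norm_smul, norm_inv, Real.norm_eq_abs, abs_of_pos hρ, div_eq_inv_mul]
      have h1 : (1 : ℝ) + ‖ρ⁻¹ • v‖ ≤ 2 / ρ * ‖v‖ := by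
        rw [hnv]
        have : (1:ℝ) ≤ ‖v‖ / ρ := (one_le_div hρ).2 hv
        rw [div_mul_eq_mul_div, two_mul]
        rw [add_div]
        linarith
      have h2 : (2 / ρ * ‖v‖) ^ (-p) ≤ (1 + ‖ρ⁻¹ • v‖) ^ (-p) :=
        Real.rpow_le_rpow_of_nonpos (by positivity) h1 (by linarith)
      have h3 : (2 / ρ * ‖v‖) ^ (-p) = (2 / ρ) ^ (-p) * ‖v‖ ^ (-p) :=
        Real.mul_rpow (by positivity) (by positivity)
      calc ‖v‖ ^ (-p) = (2 / ρ) ^ p * ((2 / ρ) ^ (-p) * ‖v‖ ^ (-p)) := by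
            rw [← mul_assoc, ← Real.rpow_add (by positivity), add_neg_cancel,
              Real.rpow_zero, one_mul]
        _ ≤ (2 / ρ) ^ p * (1 + ‖ρ⁻¹ • v‖) ^ (-p) := by
            rw [← h3]
            exact mul_le_mul_of_nonneg_left h2 (by positivity)
    · rw [Set.indicator_of_notMem (by simpa using not_le.2 hv)]
      exact zero_le
  calc ∫⁻ v, ({v : E | ρ ≤ ‖v‖}.indicator (fun v => ENNReal.ofReal (‖v‖ ^ (-p)))) v
      ≤ ∫⁻ v, ENNReal.ofReal ((2 / ρ) ^ p) * ENNReal.ofReal ((1 + ‖ρ⁻¹ • v‖) ^ (-p)) :=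
        lintegral_mono step2
    _ = ENNReal.ofReal ((2 / ρ) ^ p) * ∫⁻ v : E, ENNReal.ofReal ((1 + ‖ρ⁻¹ • v‖) ^ (-p)) :=
        lintegral_const_mul' _ _ ENNReal.ofReal_ne_top
    _ = ENNReal.ofReal ((2 / ρ) ^ p) * (ENNReal.ofReal (ρ ^ (n : ℕ)) * I) := by
        congr 1
        have hc : (ρ⁻¹ : ℝ) ≠ 0 := by positivity
        rw [hI]
        rw [← lintegral_map hg0 (measurable_const_smul ρ⁻¹)]
        rw [Measure.map_addHaar_smul volume hc]
        rw [lintegral_smul_measure]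
        congr 1
        rw [finrank_euclideanSpace_fin]
        rw [abs_inv, abs_pow, abs_inv, abs_of_pos hρ, inv_pow, inv_inv]
    _ ≤ ENNReal.ofReal (2 ^ p) * I * ENNReal.ofReal (ρ ^ ((n : ℝ) - p)) := by
        have key : (2 / ρ) ^ p * (ρ : ℝ) ^ (n : ℕ) = 2 ^ p * ρ ^ ((n : ℝ) - p) := by
          rw [Real.div_rpow (by norm_num) hρ.le, ← Real.rpow_natCast ρ n, Real.rpow_sub hρ]
          ring
        rw [← mul_assoc, ← ENNReal.ofReal_mul (by positivity), key,
          ENNReal.ofReal_mul (by positivity)]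
        exact le_of_eq (by ring)

private lemma aux_master (n : ℕ) (σ a b R₀ : ℝ) (hσ0 : 0 < σ) (ha : 0 < a) (hb : 0 < b)
    (hab : σ < a + b) (hR₀ : 0 < R₀) (d : EuclideanSpace ℝ (Fin n) → ℝ) (hd0 : ∀ x, 0 ≤ d x) :
    ∃ C : ℝ, 0 < C ∧ ∀ (z : EuclideanSpace ℝ (Fin n)) (S : Set (EuclideanSpace ℝ (Fin n))),
      MeasurableSet S → 0 < d z → d z ≤ R₀ / 2 →
      (∀ y ∈ S, d y ≤ R₀ / 2 ∧ d z ≤ 4 * ‖y - z‖ ∧ d y ≤ 4 * ‖y - z‖) →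
      ∫⁻ y in S, ENNReal.ofReal (d z ^ a * d y ^ b / ‖y - z‖ ^ ((n : ℝ) + σ))
        ≤ ENNReal.ofReal (C * R₀ ^ (a + b - σ)) := by
  set γ : ℝ := (max 0 (σ - a) + min b σ) / 2 with hγdef
  have hM1 : σ - a ≤ max 0 (σ - a) := le_max_right _ _
  have hM2 : max 0 (σ - a) < σ := max_lt hσ0 (by linarith)
  have hM3 : max 0 (σ - a) < b := max_lt hb (by linarith)
  have hm1 : σ - a < min b σ := lt_min (by linarith) (by linarith)
  have hm2 : min b σ ≤ b := min_le_left _ _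
  have hm3 : min b σ ≤ σ := min_le_right _ _
  have hm0 : 0 ≤ min b σ := le_min hb.le hσ0.le
  have hγ0 : 0 ≤ γ := by rw [hγdef]; positivity
  have hγb : γ ≤ b := by rw [hγdef]; linarith
  have hγσ : γ < σ := by rw [hγdef]; linarith
  have haγ : σ - a < γ := by rw [hγdef]; linarith
  set p : ℝ := (n : ℝ) + (σ - γ) with hpdef
  have hp : (n : ℝ) < p := by rw [hpdef]; linarith
  obtain ⟨K, hKfin, hK⟩ := aux_radial n p hp
  refine ⟨(K.toReal + 1) * (4 ^ σ * 2 ^ (σ - a - b)), by positivity, ?_⟩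
  intro z S hSmeas hz0 hzR hS
  set ρ : ℝ := d z / 4 with hρdef
  have hρ : 0 < ρ := by rw [hρdef]; positivity
  have hSsub : S ⊆ {y | ρ ≤ ‖y - z‖} := by
    intro y hy
    have := (hS y hy).2.1
    simp only [Set.mem_setOf_eq, hρdef]
    linarith
  set c₁ : ℝ := d z ^ a * ((R₀ / 2) ^ (b - γ) * 4 ^ γ) with hc₁def
  have hc₁0 : 0 ≤ c₁ := by rw [hc₁def]; positivity
  -- pointwise bound on S
  have hpt : ∀ y ∈ S, ENNReal.ofReal (d z ^ a * d y ^ b / ‖y - z‖ ^ ((n : ℝ) + σ))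
      ≤ ENNReal.ofReal c₁ * ENNReal.ofReal (‖y - z‖ ^ (-p)) := by
    intro y hy
    obtain ⟨hyR, hz4, hy4⟩ := hS y hy
    have hyz : 0 < ‖y - z‖ := by
      by_contra hcon
      push_neg at hcon
      have : ‖y - z‖ = 0 := le_antisymm hcon (norm_nonneg _)
      rw [this] at hz4
      linarith
    rw [← ENNReal.ofReal_mul hc₁0]
    apply ENNReal.ofReal_le_ofReal
    have hsplit : d y ^ b = d y ^ (b - γ) * d y ^ γ := by
      rw [← Real.rpow_add' (hd0 y) (by linarith)]
      ring_nf
    have h1 : d y ^ (b - γ) ≤ (R₀ / 2) ^ (b - γ) :=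
      Real.rpow_le_rpow (hd0 y) hyR (by linarith)
    have h2 : d y ^ γ ≤ (4 * ‖y - z‖) ^ γ :=
      Real.rpow_le_rpow (hd0 y) hy4 hγ0
    have h3 : (4 * ‖y - z‖ : ℝ) ^ γ = 4 ^ γ * ‖y - z‖ ^ γ :=
      Real.mul_rpow (by norm_num) (norm_nonneg _)
    have hnum : d y ^ b ≤ (R₀ / 2) ^ (b - γ) * (4 ^ γ * ‖y - z‖ ^ γ) := by
      rw [hsplit, ← h3]
      exact mul_le_mul h1 h2 (Real.rpow_nonneg (hd0 y) _) (by positivity)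
    have hnum2 : d z ^ a * d y ^ b ≤ c₁ * ‖y - z‖ ^ γ := by
      calc d z ^ a * d y ^ b ≤ d z ^ a * ((R₀ / 2) ^ (b - γ) * (4 ^ γ * ‖y - z‖ ^ γ)) :=
            mul_le_mul_of_nonneg_left hnum (Real.rpow_nonneg (hd0 z) _)
        _ = c₁ * ‖y - z‖ ^ γ := by rw [hc₁def]; ring
    have hfinal : d z ^ a * d y ^ b / ‖y - z‖ ^ ((n : ℝ) + σ)
        ≤ c₁ * ‖y - z‖ ^ γ / ‖y - z‖ ^ ((n : ℝ) + σ) := by gcongr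
    refine hfinal.trans (le_of_eq ?_)
    rw [mul_div_assoc, ← Real.rpow_sub hyz]
    congr 1
    · congr 1
      rw [hpdef]
      ring
  calc ∫⁻ y in S, ENNReal.ofReal (d z ^ a * d y ^ b / ‖y - z‖ ^ ((n : ℝ) + σ))
      ≤ ∫⁻ y in S, ENNReal.ofReal c₁ * ENNReal.ofReal (‖y - z‖ ^ (-p)) :=
        setLIntegral_mono' hSmeas hpt
    _ = ENNReal.ofReal c₁ * ∫⁻ y in S, ENNReal.ofReal (‖y - z‖ ^ (-p)) :=
        lintegral_const_mul' _ _ ENNReal.ofReal_ne_top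
    _ ≤ ENNReal.ofReal c₁ * ∫⁻ y in {y | ρ ≤ ‖y - z‖}, ENNReal.ofReal (‖y - z‖ ^ (-p)) :=
        mul_le_mul_right (lintegral_mono_set hSsub) _
    _ ≤ ENNReal.ofReal c₁ * (K * ENNReal.ofReal (ρ ^ ((n : ℝ) - p))) :=
        mul_le_mul_right (hK ρ hρ z) _
    _ = K * ENNReal.ofReal (c₁ * ρ ^ ((n : ℝ) - p)) := by
        rw [ENNReal.ofReal_mul hc₁0]; ring
    _ ≤ ENNReal.ofReal (K.toReal + 1) * ENNReal.ofReal (c₁ * ρ ^ ((n : ℝ) - p)) := by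
        apply mul_le_mul_left
        exact le_trans (le_of_eq (ENNReal.ofReal_toReal hKfin).symm)
          (ENNReal.ofReal_le_ofReal (by linarith))
    _ ≤ ENNReal.ofReal ((K.toReal + 1) * (4 ^ σ * 2 ^ (σ - a - b)) * R₀ ^ (a + b - σ)) := by
        rw [← ENNReal.ofReal_mul (by positivity)]
        apply ENNReal.ofReal_le_ofReal
        rw [mul_assoc (K.toReal + 1) (4 ^ σ * 2 ^ (σ - a - b)) (R₀ ^ (a + b - σ))]
        apply mul_le_mul_of_nonneg_left ?_ (by positivity)
        -- key real computation
        have hnp : (n : ℝ) - p = γ - σ := by rw [hpdef]; ring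
        rw [hnp]
        have hρeq : ρ ^ (γ - σ) = d z ^ (γ - σ) * 4 ^ (σ - γ) := by
          rw [hρdef, Real.div_rpow (hd0 z) (by norm_num), div_eq_mul_inv,
            ← Real.rpow_neg (by norm_num : (0:ℝ) ≤ 4)]
          ring_nf
        have hdz : d z ^ a * d z ^ (γ - σ) = d z ^ (a + (γ - σ)) :=
          (Real.rpow_add hz0 _ _).symm
        have hexp : 0 ≤ a + (γ - σ) := by linarith
        have hdzR : d z ^ (a + (γ - σ)) ≤ (R₀ / 2) ^ (a + (γ - σ)) :=
          Real.rpow_le_rpow (hd0 z) hzR hexp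
        have h4 : (4:ℝ) ^ γ * 4 ^ (σ - γ) = 4 ^ σ := by
          rw [← Real.rpow_add (by norm_num)]; ring_nf
        have hhalf : ∀ e : ℝ, (R₀ / 2 : ℝ) ^ e = R₀ ^ e * 2 ^ (-e) := by
          intro e
          rw [Real.div_rpow hR₀.le (by norm_num), div_eq_mul_inv,
            ← Real.rpow_neg (by norm_num : (0:ℝ) ≤ 2)]
        calc c₁ * ρ ^ (γ - σ)
            = (d z ^ a * d z ^ (γ - σ)) * ((R₀ / 2) ^ (b - γ) * (4 ^ γ * 4 ^ (σ - γ))) := by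
              rw [hc₁def, hρeq]; ring
          _ = d z ^ (a + (γ - σ)) * ((R₀ / 2) ^ (b - γ) * 4 ^ σ) := by rw [hdz, h4]
          _ ≤ (R₀ / 2) ^ (a + (γ - σ)) * ((R₀ / 2) ^ (b - γ) * 4 ^ σ) := by
              apply mul_le_mul_of_nonneg_right hdzR (by positivity)
          _ = 4 ^ σ * 2 ^ (σ - a - b) * R₀ ^ (a + b - σ) := by
              rw [← mul_assoc, ← Real.rpow_add (by positivity : (0:ℝ) < R₀ / 2),
                show a + (γ - σ) + (b - γ) = a + b - σ by ring, hhalf]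
              ring


private lemma aux_geom (n : ℕ) (R₀ : ℝ) (hR₀ : 0 < R₀) (r : ℕ → ℝ) (hr : ∀ k, r k = R₀ / 2 ^ k)
    (d : EuclideanSpace ℝ (Fin n) → ℝ)
    (hLip : ∀ x y : EuclideanSpace ℝ (Fin n), d x ≤ d y + ‖x - y‖)
    (k j : ℕ) (hkj : k + 2 ≤ j) (x y : EuclideanSpace ℝ (Fin n))
    (hx1 : r (k + 1) < d x) (hx2 : d x ≤ r k) (hy2 : d y ≤ r j) :
    d x ≤ 4 * ‖x - y‖ ∧ d y ≤ 4 * ‖x - y‖ := by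
  have hpow : (2:ℝ) ^ (k + 2) ≤ 2 ^ j := pow_le_pow_right₀ one_le_two hkj
  have h2 : r j ≤ r (k + 2) := by
    rw [hr, hr]
    exact div_le_div_of_nonneg_left hR₀.le (by positivity) hpow
  have htk : r (k + 1) = 2 * r (k + 2) := by rw [hr, hr, pow_succ]; ring
  have hk4 : r k = 4 * r (k + 2) := by rw [hr, hr, pow_succ, pow_succ]; ring
  have hL := hLip x y
  have hrpos : 0 < r (k + 2) := by rw [hr]; positivity
  have hyr : d y ≤ r (k + 2) := hy2.trans h2
  have ht : r (k + 2) ≤ ‖x - y‖ := by linarith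
  have hnn : (0:ℝ) ≤ ‖x - y‖ := norm_nonneg _
  constructor
  · linarith
  · linarith


set_option maxHeartbeats 1000000 in
/-- With `r_k = 2^{-k} R₀`, layers `Ω_k = {x ∈ Ω : r_{k+1} < d(x) ≤ r_k}` and
boundary layer `Ω₀ = {x ∈ Ω : 0 < d(x) ≤ R₀/2}`, if `σ ∈ (0,1)`, `α, β > 0` and
`α + β > σ`, there is `C = C(n,σ,α,β) > 0` such that for every `F ∈ L¹(Ω;ℝⁿ)`,
`∑_{k,j ≥ 1, |k-j| ≥ 2} ∫_{Ω_k} ∫_{Ω_j} d^α(x) d^β(y) |F(x) - F(y)| / |x-y|^{n+σ} dx dy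
  ≤ C R₀^{α+β-σ} ∫_{Ω₀} |F(x)| dx`. -/
theorem statement12 (n : ℕ) (hn : 2 ≤ n)
    (Ω : Set (EuclideanSpace ℝ (Fin n))) (hΩo : IsOpen Ω) (hΩb : Bornology.IsBounded Ω)
    (σ : ℝ) (hσ : σ ∈ Set.Ioo (0:ℝ) 1) (α β : ℝ) (hα : 0 < α) (hβ : 0 < β) (hαβ : σ < α + β)
    (R₀ : ℝ) (hR₀ : 0 < R₀) (r : ℕ → ℝ) (hr : ∀ k, r k = R₀ / 2 ^ k)
    (d : EuclideanSpace ℝ (Fin n) → ℝ)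
    (hd : ∀ x, d x = Metric.infDist x (frontier Ω))
    (Ωl : ℕ → Set (EuclideanSpace ℝ (Fin n)))
    (hΩl : ∀ k, Ωl k = {x ∈ Ω | r (k + 1) < d x ∧ d x ≤ r k})
    (Ω₀ : Set (EuclideanSpace ℝ (Fin n)))
    (hΩ₀ : Ω₀ = {x ∈ Ω | 0 < d x ∧ d x ≤ R₀ / 2}) :
    ∃ C : ℝ, 0 < C ∧
      ∀ F : EuclideanSpace ℝ (Fin n) → EuclideanSpace ℝ (Fin n), IntegrableOn F Ω →
      (∑' k : ℕ, ∑' j : ℕ,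
        if 1 ≤ k ∧ 1 ≤ j ∧ 2 ≤ ((k : ℤ) - (j : ℤ)).natAbs then
          ∫⁻ x in Ωl k, ∫⁻ y in Ωl j,
            ENNReal.ofReal (d x ^ α * d y ^ β * (‖F x - F y‖ / ‖x - y‖ ^ ((n : ℝ) + σ)))
        else 0)
        ≤ ENNReal.ofReal (C * R₀ ^ (α + β - σ) * ∫ x in Ω₀, ‖F x‖) := by
  classical
  have hd0 : ∀ x, 0 ≤ d x := fun x => (hd x) ▸ Metric.infDist_nonneg
  have hdm : Measurable d := by
    have : d = fun x => Metric.infDist x (frontier Ω) := funext hd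
    rw [this]
    exact (Metric.continuous_infDist_pt _).measurable
  have hLip : ∀ x y : EuclideanSpace ℝ (Fin n), d x ≤ d y + ‖x - y‖ := by
    intro x y
    rw [hd x, hd y, ← dist_eq_norm]
    exact Metric.infDist_le_infDist_add_dist
  have hrpos : ∀ k, 0 < r k := fun k => by rw [hr]; positivity
  have hrmono : ∀ {i j : ℕ}, i ≤ j → r j ≤ r i := by
    intro i j hij
    rw [hr, hr]
    exact div_le_div_of_nonneg_left hR₀.le (by positivity) (pow_le_pow_right₀ one_le_two hij)
  have hr1 : r 1 = R₀ / 2 := by rw [hr]; norm_num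
  have hΩlsub : ∀ k, Ωl k ⊆ Ω := fun k => by rw [hΩl]; exact fun x hx => hx.1
  have hΩ₀sub : Ω₀ ⊆ Ω := by rw [hΩ₀]; exact fun x hx => hx.1
  have hΩlsub0 : ∀ k, 1 ≤ k → Ωl k ⊆ Ω₀ := by
    intro k hk x hx
    rw [hΩl] at hx
    rw [hΩ₀]
    exact ⟨hx.1, (hrpos (k+1)).trans hx.2.1, hx.2.2.trans (hr1 ▸ hrmono hk)⟩
  have hmeasl : ∀ k, MeasurableSet (Ωl k) := by
    intro k
    have : Ωl k = Ω ∩ d ⁻¹' Set.Ioc (r (k+1)) (r k) := by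
      rw [hΩl]; ext x
      simp only [Set.mem_setOf_eq, Set.mem_inter_iff, Set.mem_preimage, Set.mem_Ioc]
      try tauto
    rw [this]
    exact hΩo.measurableSet.inter (hdm measurableSet_Ioc)
  have hmeas0 : MeasurableSet Ω₀ := by
    have : Ω₀ = Ω ∩ d ⁻¹' Set.Ioc 0 (R₀ / 2) := by
      rw [hΩ₀]; ext x
      simp only [Set.mem_setOf_eq, Set.mem_inter_iff, Set.mem_preimage, Set.mem_Ioc]
      try tauto
    rw [this]
    exact hΩo.measurableSet.inter (hdm measurableSet_Ioc)
  have hdisj : Pairwise (Function.onFun Disjoint Ωl) := by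
    have key : ∀ i j : ℕ, i < j → Disjoint (Ωl i) (Ωl j) := by
      intro i j hij
      rw [Set.disjoint_left]
      intro x hxi hxj
      rw [hΩl] at hxi hxj
      have h1 : d x ≤ r j := hxj.2.2
      have h2 : r (i+1) < d x := hxi.2.1
      have h3 : r j ≤ r (i+1) := hrmono hij
      linarith
    intro i j hij
    rcases lt_or_gt_of_ne hij with h | h
    · exact key i j h
    · exact (key j i h).symm
  -- geometry
  have hgeom : ∀ k j : ℕ, 1 ≤ k → 1 ≤ j → 2 ≤ ((k : ℤ) - (j : ℤ)).natAbs →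
      ∀ x ∈ Ωl k, ∀ y ∈ Ωl j,
      d y ≤ R₀ / 2 ∧ d x ≤ 4 * ‖y - x‖ ∧ d y ≤ 4 * ‖y - x‖ := by
    intro k j hk hj habs x hx y hy
    rw [hΩl] at hx hy
    have hyR : d y ≤ R₀ / 2 := hy.2.2.trans (hr1 ▸ hrmono hj)
    have hcase : k + 2 ≤ j ∨ j + 2 ≤ k := by omega
    rcases hcase with hc | hc
    · have := aux_geom n R₀ hR₀ r hr d hLip k j hc x y hx.2.1 hx.2.2 hy.2.2
      rw [norm_sub_rev] at this
      exact ⟨hyR, this.1, this.2⟩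
    · have := aux_geom n R₀ hR₀ r hr d hLip j k hc y x hy.2.1 hy.2.2 hx.2.2
      exact ⟨hyR, this.2, this.1⟩
  obtain ⟨CA, hCA0, hmA⟩ := aux_master n σ α β R₀ hσ.1 hα hβ hαβ hR₀ d hd0
  obtain ⟨CB, hCB0, hmB⟩ := aux_master n σ β α R₀ hσ.1 hβ hα (by linarith) hR₀ d hd0
  refine ⟨CA + CB, by positivity, ?_⟩
  intro F hF
  -- measurable representative
  set G := hF.1.mk F with hGdef
  have hFG : F =ᵐ[volume.restrict Ω] G := hF.1.ae_eq_mk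
  have hGmeas : Measurable G := hF.1.stronglyMeasurable_mk.measurable
  have haek : ∀ k, ∀ᵐ x ∂(volume.restrict (Ωl k)), F x = G x := fun k =>
    ae_restrict_of_ae_restrict_of_subset (hΩlsub k) hFG
  have hae0 : ∀ᵐ x ∂(volume.restrict Ω₀), F x = G x :=
    ae_restrict_of_ae_restrict_of_subset hΩ₀sub hFG
  -- abbreviations
  set h : EuclideanSpace ℝ (Fin n) → ℝ≥0∞ := fun x => ENNReal.ofReal ‖G x‖ with hhdef
  have hhm : Measurable h := (hGmeas.norm).ennreal_ofReal
  have hhne : ∀ x, h x ≠ ∞ := fun x => by simp only [hhdef]; exact ENNReal.ofReal_ne_top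
  set w : EuclideanSpace ℝ (Fin n) → EuclideanSpace ℝ (Fin n) → ℝ≥0∞ :=
    fun x y => ENNReal.ofReal (d x ^ α * d y ^ β / ‖x - y‖ ^ ((n : ℝ) + σ)) with hwdef
  have hwm : Measurable fun p : EuclideanSpace ℝ (Fin n) × EuclideanSpace ℝ (Fin n) =>
      w p.1 p.2 := by
    simp only [hwdef]; fun_prop
  -- replace F by G on the left-hand side
  have hLHSeq : (∑' k : ℕ, ∑' j : ℕ,
        if 1 ≤ k ∧ 1 ≤ j ∧ 2 ≤ ((k : ℤ) - (j : ℤ)).natAbs then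
          ∫⁻ x in Ωl k, ∫⁻ y in Ωl j,
            ENNReal.ofReal (d x ^ α * d y ^ β * (‖F x - F y‖ / ‖x - y‖ ^ ((n : ℝ) + σ)))
        else 0)
      = (∑' k : ℕ, ∑' j : ℕ,
        if 1 ≤ k ∧ 1 ≤ j ∧ 2 ≤ ((k : ℤ) - (j : ℤ)).natAbs then
          ∫⁻ x in Ωl k, ∫⁻ y in Ωl j,
            ENNReal.ofReal (d x ^ α * d y ^ β * (‖G x - G y‖ / ‖x - y‖ ^ ((n : ℝ) + σ)))
        else 0) := by
    refine tsum_congr fun k => tsum_congr fun j => ?_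
    split_ifs with hc
    · apply lintegral_congr_ae
      filter_upwards [haek k] with x hx
      apply lintegral_congr_ae
      filter_upwards [haek j] with y hy
      rw [hx, hy]
    · rfl
  rw [hLHSeq]
  have hRHSint : ∫ x in Ω₀, ‖F x‖ = ∫ x in Ω₀, ‖G x‖ :=
    integral_congr_ae (hae0.mono fun x hx => by simp only [hx])
  rw [hRHSint]
  -- pointwise splitting
  have hsplitpt : ∀ x y : EuclideanSpace ℝ (Fin n),
      ENNReal.ofReal (d x ^ α * d y ^ β * (‖G x - G y‖ / ‖x - y‖ ^ ((n : ℝ) + σ)))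
        ≤ h x * w x y + h y * w x y := by
    intro x y
    have h1 : d x ^ α * d y ^ β * (‖G x - G y‖ / ‖x - y‖ ^ ((n : ℝ) + σ))
        ≤ (‖G x‖ + ‖G y‖) * (d x ^ α * d y ^ β / ‖x - y‖ ^ ((n : ℝ) + σ)) := by
      have e : d x ^ α * d y ^ β * (‖G x - G y‖ / ‖x - y‖ ^ ((n : ℝ) + σ))
          = ‖G x - G y‖ * (d x ^ α * d y ^ β / ‖x - y‖ ^ ((n : ℝ) + σ)) := by ring
      rw [e]
      exact mul_le_mul_of_nonneg_right (norm_sub_le _ _) (div_nonneg (mul_nonneg (Real.rpow_nonneg (hd0 x) _) (Real.rpow_nonneg (hd0 y) _)) (Real.rpow_nonneg (norm_nonneg _) _))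
    calc ENNReal.ofReal (d x ^ α * d y ^ β * (‖G x - G y‖ / ‖x - y‖ ^ ((n : ℝ) + σ)))
        ≤ ENNReal.ofReal ((‖G x‖ + ‖G y‖) * (d x ^ α * d y ^ β / ‖x - y‖ ^ ((n : ℝ) + σ))) :=
          ENNReal.ofReal_le_ofReal h1
      _ = (h x + h y) * w x y := by
          rw [ENNReal.ofReal_mul (by positivity), ENNReal.ofReal_add (norm_nonneg _) (norm_nonneg _)]
      _ = h x * w x y + h y * w x y := add_mul _ _ _
  set A : ℕ → ℕ → ℝ≥0∞ := fun k j => ∫⁻ x in Ωl k, ∫⁻ y in Ωl j, h x * w x y with hAdef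
  set B : ℕ → ℕ → ℝ≥0∞ := fun k j => ∫⁻ x in Ωl k, ∫⁻ y in Ωl j, h y * w x y with hBdef
  have hT_le : ∀ k j, (∫⁻ x in Ωl k, ∫⁻ y in Ωl j,
      ENNReal.ofReal (d x ^ α * d y ^ β * (‖G x - G y‖ / ‖x - y‖ ^ ((n : ℝ) + σ))))
      ≤ A k j + B k j := by
    intro k j
    have e1 : ∀ x, (∫⁻ y in Ωl j, (h x * w x y + h y * w x y))
        = (∫⁻ y in Ωl j, h x * w x y) + ∫⁻ y in Ωl j, h y * w x y := fun x =>
      lintegral_add_left (measurable_const.mul (hwm.comp measurable_prodMk_left)) _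
    calc (∫⁻ x in Ωl k, ∫⁻ y in Ωl j,
          ENNReal.ofReal (d x ^ α * d y ^ β * (‖G x - G y‖ / ‖x - y‖ ^ ((n : ℝ) + σ))))
        ≤ ∫⁻ x in Ωl k, ∫⁻ y in Ωl j, (h x * w x y + h y * w x y) :=
          lintegral_mono fun x => lintegral_mono fun y => hsplitpt x y
      _ = A k j + B k j := by
          simp_rw [e1]
          exact lintegral_add_left
            (Measurable.lintegral_prod_right' ((hhm.comp measurable_fst).mul hwm)) _
  -- Part A
  have hpartA : (∑' k : ℕ, ∑' j : ℕ,
        if 1 ≤ k ∧ 1 ≤ j ∧ 2 ≤ ((k : ℤ) - (j : ℤ)).natAbs then A k j else 0)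
      ≤ ENNReal.ofReal (CA * R₀ ^ (α + β - σ)) * ∫⁻ x in Ω₀, h x := by
    set SA : ℕ → ℕ → Set (EuclideanSpace ℝ (Fin n)) := fun k j =>
      if 1 ≤ k ∧ 1 ≤ j ∧ 2 ≤ ((k : ℤ) - (j : ℤ)).natAbs then Ωl j else ∅ with hSAdef
    have hSAmeas : ∀ k j, MeasurableSet (SA k j) := by
      intro k j; simp only [hSAdef]; split_ifs
      · exact hmeasl j
      · exact MeasurableSet.empty
    have hSAsub : ∀ k j, SA k j ⊆ Ωl j := by
      intro k j; simp only [hSAdef]; split_ifs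
      · exact subset_rfl
      · exact Set.empty_subset _
    have hSAdisj : ∀ k, Pairwise (Function.onFun Disjoint (SA k)) := fun k i j hij =>
      (hdisj hij).mono (hSAsub k i) (hSAsub k j)
    have step1 : ∀ k j : ℕ, (if 1 ≤ k ∧ 1 ≤ j ∧ 2 ≤ ((k : ℤ) - (j : ℤ)).natAbs then A k j else 0)
        = ∫⁻ x in Ωl k, ∫⁻ y in SA k j, h x * w x y := by
      intro k j
      simp only [hSAdef]
      split_ifs with hc
      · simp only [hAdef]
      · simp
    have step2 : ∀ k, (∑' j : ℕ, ∫⁻ x in Ωl k, ∫⁻ y in SA k j, h x * w x y)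
        = ∫⁻ x in Ωl k, ∫⁻ y in ⋃ j, SA k j, h x * w x y := by
      intro k
      refine ((lintegral_tsum (fun j => ?_)).symm).trans
        (lintegral_congr fun x => (lintegral_iUnion (hSAmeas k) (hSAdisj k) _).symm)
      exact (Measurable.lintegral_prod_right' ((hhm.comp measurable_fst).mul hwm)).aemeasurable
    have hinner : ∀ k, 1 ≤ k → ∀ x ∈ Ωl k,
        (∫⁻ y in ⋃ j, SA k j, w x y) ≤ ENNReal.ofReal (CA * R₀ ^ (α + β - σ)) := by
      intro k hk x hx
      have hx' := hx
      rw [hΩl] at hx'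
      have hdx0 : 0 < d x := (hrpos (k+1)).trans hx'.2.1
      have hdxR : d x ≤ R₀ / 2 := hx'.2.2.trans (hr1 ▸ hrmono hk)
      have hcond : ∀ y ∈ ⋃ j, SA k j,
          d y ≤ R₀ / 2 ∧ d x ≤ 4 * ‖y - x‖ ∧ d y ≤ 4 * ‖y - x‖ := by
        intro y hy
        obtain ⟨j, hyj⟩ := Set.mem_iUnion.1 hy
        simp only [hSAdef] at hyj
        split_ifs at hyj with hc
        · exact hgeom k j hc.1 hc.2.1 hc.2.2 x hx y hyj
        · exact absurd hyj (Set.notMem_empty y)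
      have hres := hmA x (⋃ j, SA k j) (MeasurableSet.iUnion (hSAmeas k)) hdx0 hdxR hcond
      calc (∫⁻ y in ⋃ j, SA k j, w x y)
          = ∫⁻ y in ⋃ j, SA k j,
              ENNReal.ofReal (d x ^ α * d y ^ β / ‖y - x‖ ^ ((n : ℝ) + σ)) := by
            refine lintegral_congr fun y => ?_
            simp only [hwdef]
            rw [norm_sub_rev]
        _ ≤ ENNReal.ofReal (CA * R₀ ^ (α + β - σ)) := hres
    have step3 : ∀ k, (∫⁻ x in Ωl k, ∫⁻ y in ⋃ j, SA k j, h x * w x y)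
        ≤ if 1 ≤ k then ENNReal.ofReal (CA * R₀ ^ (α + β - σ)) * ∫⁻ x in Ωl k, h x else 0 := by
      intro k
      by_cases hk : 1 ≤ k
      · rw [if_pos hk]
        have e : ∀ x, (∫⁻ y in ⋃ j, SA k j, h x * w x y)
            = h x * ∫⁻ y in ⋃ j, SA k j, w x y := fun x =>
          lintegral_const_mul' _ _ (hhne x)
        calc (∫⁻ x in Ωl k, ∫⁻ y in ⋃ j, SA k j, h x * w x y)
            = ∫⁻ x in Ωl k, h x * ∫⁻ y in ⋃ j, SA k j, w x y := lintegral_congr e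
          _ ≤ ∫⁻ x in Ωl k, h x * ENNReal.ofReal (CA * R₀ ^ (α + β - σ)) :=
              setLIntegral_mono' (hmeasl k) fun x hx =>
                mul_le_mul_right (hinner k hk x hx) _
          _ = ENNReal.ofReal (CA * R₀ ^ (α + β - σ)) * ∫⁻ x in Ωl k, h x := by
              simp_rw [mul_comm (h _) (ENNReal.ofReal (CA * R₀ ^ (α + β - σ)))]
              exact lintegral_const_mul' _ _ ENNReal.ofReal_ne_top
      · rw [if_neg hk]
        have hempty : (⋃ j, SA k j) = (∅ : Set (EuclideanSpace ℝ (Fin n))) := by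
          refine Set.iUnion_eq_empty.2 fun j => ?_
          simp only [hSAdef]
          rw [if_neg fun hc => hk hc.1]
        rw [hempty]
        simp
    have step4 : (∑' k : ℕ, if 1 ≤ k then ENNReal.ofReal (CA * R₀ ^ (α + β - σ))
          * ∫⁻ x in Ωl k, h x else 0)
        ≤ ENNReal.ofReal (CA * R₀ ^ (α + β - σ)) * ∫⁻ x in Ω₀, h x := by
      set V : ℕ → Set (EuclideanSpace ℝ (Fin n)) := fun k => if 1 ≤ k then Ωl k else ∅
        with hVdef
      have hVmeas : ∀ k, MeasurableSet (V k) := by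
        intro k; simp only [hVdef]; split_ifs
        · exact hmeasl k
        · exact MeasurableSet.empty
      have hVsub : ∀ k, V k ⊆ Ωl k := by
        intro k; simp only [hVdef]; split_ifs
        · exact subset_rfl
        · exact Set.empty_subset _
      have hVdisj : Pairwise (Function.onFun Disjoint V) := fun i j hij =>
        (hdisj hij).mono (hVsub i) (hVsub j)
      have hVsub0 : (⋃ k, V k) ⊆ Ω₀ := by
        refine Set.iUnion_subset fun k => ?_
        simp only [hVdef]
        split_ifs with hk
        · exact hΩlsub0 k hk
        · exact Set.empty_subset _
      have e : ∀ k, (if 1 ≤ k then ENNReal.ofReal (CA * R₀ ^ (α + β - σ))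
            * ∫⁻ x in Ωl k, h x else 0)
          = ENNReal.ofReal (CA * R₀ ^ (α + β - σ)) * ∫⁻ x in V k, h x := by
        intro k
        simp only [hVdef]
        split_ifs with hk
        · rfl
        · simp
      calc (∑' k : ℕ, if 1 ≤ k then ENNReal.ofReal (CA * R₀ ^ (α + β - σ))
            * ∫⁻ x in Ωl k, h x else 0)
          = ENNReal.ofReal (CA * R₀ ^ (α + β - σ)) * ∑' k, ∫⁻ x in V k, h x := by
            simp_rw [e]
            exact ENNReal.tsum_mul_left
        _ = ENNReal.ofReal (CA * R₀ ^ (α + β - σ)) * ∫⁻ x in ⋃ k, V k, h x := by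
            rw [lintegral_iUnion hVmeas hVdisj]
        _ ≤ ENNReal.ofReal (CA * R₀ ^ (α + β - σ)) * ∫⁻ x in Ω₀, h x :=
            mul_le_mul_right (lintegral_mono_set hVsub0) _
    calc (∑' k : ℕ, ∑' j : ℕ,
          if 1 ≤ k ∧ 1 ≤ j ∧ 2 ≤ ((k : ℤ) - (j : ℤ)).natAbs then A k j else 0)
        = ∑' k : ℕ, ∫⁻ x in Ωl k, ∫⁻ y in ⋃ j, SA k j, h x * w x y := by
          refine tsum_congr fun k => ?_
          rw [tsum_congr (step1 k), step2 k]
      _ ≤ ∑' k : ℕ, (if 1 ≤ k then ENNReal.ofReal (CA * R₀ ^ (α + β - σ))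
            * ∫⁻ x in Ωl k, h x else 0) := ENNReal.tsum_le_tsum step3
      _ ≤ ENNReal.ofReal (CA * R₀ ^ (α + β - σ)) * ∫⁻ x in Ω₀, h x := step4
  -- Part B
  have hpartB : (∑' k : ℕ, ∑' j : ℕ,
        if 1 ≤ k ∧ 1 ≤ j ∧ 2 ≤ ((k : ℤ) - (j : ℤ)).natAbs then B k j else 0)
      ≤ ENNReal.ofReal (CB * R₀ ^ (α + β - σ)) * ∫⁻ x in Ω₀, h x := by
    have hswap : ∀ k j, B k j = ∫⁻ y in Ωl j, h y * ∫⁻ x in Ωl k, w x y := by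
      intro k j
      simp only [hBdef]
      rw [lintegral_lintegral_swap ((hhm.comp measurable_snd).mul hwm).aemeasurable]
      exact lintegral_congr fun y => lintegral_const_mul' _ _ (hhne y)
    set SB : ℕ → ℕ → Set (EuclideanSpace ℝ (Fin n)) := fun j k =>
      if 1 ≤ k ∧ 1 ≤ j ∧ 2 ≤ ((k : ℤ) - (j : ℤ)).natAbs then Ωl k else ∅ with hSBdef
    have hSBmeas : ∀ j k, MeasurableSet (SB j k) := by
      intro j k; simp only [hSBdef]; split_ifs
      · exact hmeasl k
      · exact MeasurableSet.empty
    have hSBsub : ∀ j k, SB j k ⊆ Ωl k := by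
      intro j k; simp only [hSBdef]; split_ifs
      · exact subset_rfl
      · exact Set.empty_subset _
    have hSBdisj : ∀ j, Pairwise (Function.onFun Disjoint (SB j)) := fun j i k hik =>
      (hdisj hik).mono (hSBsub j i) (hSBsub j k)
    have step1 : ∀ k j : ℕ, (if 1 ≤ k ∧ 1 ≤ j ∧ 2 ≤ ((k : ℤ) - (j : ℤ)).natAbs then B k j else 0)
        = ∫⁻ y in Ωl j, h y * ∫⁻ x in SB j k, w x y := by
      intro k j
      simp only [hSBdef]
      split_ifs with hc
      · rw [hswap]
      · simp
    have step2 : ∀ j, (∑' k : ℕ, ∫⁻ y in Ωl j, h y * ∫⁻ x in SB j k, w x y)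
        = ∫⁻ y in Ωl j, h y * ∫⁻ x in ⋃ k, SB j k, w x y := by
      intro j
      rw [← lintegral_tsum]
      · refine lintegral_congr fun y => ?_
        rw [lintegral_iUnion (hSBmeas j) (hSBdisj j)]
        exact ENNReal.tsum_mul_left
      · intro k
        refine Measurable.aemeasurable (hhm.mul ?_)
        exact Measurable.lintegral_prod_right'
          (f := fun p : _ × _ => w p.2 p.1) (hwm.comp (measurable_snd.prodMk measurable_fst))
    have hinner : ∀ j, 1 ≤ j → ∀ y ∈ Ωl j,
        (∫⁻ x in ⋃ k, SB j k, w x y) ≤ ENNReal.ofReal (CB * R₀ ^ (α + β - σ)) := by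
      intro j hj y hy
      have hy' := hy
      rw [hΩl] at hy'
      have hdy0 : 0 < d y := (hrpos (j+1)).trans hy'.2.1
      have hdyR : d y ≤ R₀ / 2 := hy'.2.2.trans (hr1 ▸ hrmono hj)
      have hcond : ∀ x ∈ ⋃ k, SB j k,
          d x ≤ R₀ / 2 ∧ d y ≤ 4 * ‖x - y‖ ∧ d x ≤ 4 * ‖x - y‖ := by
        intro x hx
        obtain ⟨k, hxk⟩ := Set.mem_iUnion.1 hx
        simp only [hSBdef] at hxk
        split_ifs at hxk with hc
        · exact hgeom j k hc.2.1 hc.1 (by omega) y hy x hxk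
        · exact absurd hxk (Set.notMem_empty x)
      have hres := hmB y (⋃ k, SB j k) (MeasurableSet.iUnion (hSBmeas j)) hdy0 hdyR hcond
      calc (∫⁻ x in ⋃ k, SB j k, w x y)
          = ∫⁻ x in ⋃ k, SB j k,
              ENNReal.ofReal (d y ^ β * d x ^ α / ‖x - y‖ ^ ((n : ℝ) + σ)) := by
            refine lintegral_congr fun x => ?_
            simp only [hwdef]
            rw [mul_comm (d x ^ α) (d y ^ β)]
        _ ≤ ENNReal.ofReal (CB * R₀ ^ (α + β - σ)) := by
            rw [show α + β - σ = β + α - σ by ring]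
            exact hres
    have step3 : ∀ j, (∫⁻ y in Ωl j, h y * ∫⁻ x in ⋃ k, SB j k, w x y)
        ≤ if 1 ≤ j then ENNReal.ofReal (CB * R₀ ^ (α + β - σ)) * ∫⁻ y in Ωl j, h y else 0 := by
      intro j
      by_cases hj : 1 ≤ j
      · rw [if_pos hj]
        calc (∫⁻ y in Ωl j, h y * ∫⁻ x in ⋃ k, SB j k, w x y)
            ≤ ∫⁻ y in Ωl j, h y * ENNReal.ofReal (CB * R₀ ^ (α + β - σ)) :=
              setLIntegral_mono' (hmeasl j) fun y hy =>
                mul_le_mul_right (hinner j hj y hy) _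
          _ = ENNReal.ofReal (CB * R₀ ^ (α + β - σ)) * ∫⁻ y in Ωl j, h y := by
              simp_rw [mul_comm (h _) (ENNReal.ofReal (CB * R₀ ^ (α + β - σ)))]
              exact lintegral_const_mul' _ _ ENNReal.ofReal_ne_top
      · rw [if_neg hj]
        have hempty : (⋃ k, SB j k) = (∅ : Set (EuclideanSpace ℝ (Fin n))) := by
          refine Set.iUnion_eq_empty.2 fun k => ?_
          simp only [hSBdef]
          rw [if_neg fun hc => hj hc.2.1]
        rw [hempty]
        simp
    have step4 : (∑' j : ℕ, if 1 ≤ j then ENNReal.ofReal (CB * R₀ ^ (α + β - σ))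
          * ∫⁻ y in Ωl j, h y else 0)
        ≤ ENNReal.ofReal (CB * R₀ ^ (α + β - σ)) * ∫⁻ x in Ω₀, h x := by
      set V : ℕ → Set (EuclideanSpace ℝ (Fin n)) := fun k => if 1 ≤ k then Ωl k else ∅
        with hVdef
      have hVmeas : ∀ k, MeasurableSet (V k) := by
        intro k; simp only [hVdef]; split_ifs
        · exact hmeasl k
        · exact MeasurableSet.empty
      have hVsub : ∀ k, V k ⊆ Ωl k := by
        intro k; simp only [hVdef]; split_ifs
        · exact subset_rfl
        · exact Set.empty_subset _
      have hVdisj : Pairwise (Function.onFun Disjoint V) := fun i j hij =>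
        (hdisj hij).mono (hVsub i) (hVsub j)
      have hVsub0 : (⋃ k, V k) ⊆ Ω₀ := by
        refine Set.iUnion_subset fun k => ?_
        simp only [hVdef]
        split_ifs with hk
        · exact hΩlsub0 k hk
        · exact Set.empty_subset _
      have e : ∀ k, (if 1 ≤ k then ENNReal.ofReal (CB * R₀ ^ (α + β - σ))
            * ∫⁻ x in Ωl k, h x else 0)
          = ENNReal.ofReal (CB * R₀ ^ (α + β - σ)) * ∫⁻ x in V k, h x := by
        intro k
        simp only [hVdef]
        split_ifs with hk
        · rfl
        · simp
      calc (∑' j : ℕ, if 1 ≤ j then ENNReal.ofReal (CB * R₀ ^ (α + β - σ))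
            * ∫⁻ y in Ωl j, h y else 0)
          = ENNReal.ofReal (CB * R₀ ^ (α + β - σ)) * ∑' k, ∫⁻ x in V k, h x := by
            simp_rw [e]
            exact ENNReal.tsum_mul_left
        _ = ENNReal.ofReal (CB * R₀ ^ (α + β - σ)) * ∫⁻ x in ⋃ k, V k, h x := by
            rw [lintegral_iUnion hVmeas hVdisj]
        _ ≤ ENNReal.ofReal (CB * R₀ ^ (α + β - σ)) * ∫⁻ x in Ω₀, h x :=
            mul_le_mul_right (lintegral_mono_set hVsub0) _
    calc (∑' k : ℕ, ∑' j : ℕ,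
          if 1 ≤ k ∧ 1 ≤ j ∧ 2 ≤ ((k : ℤ) - (j : ℤ)).natAbs then B k j else 0)
        = ∑' j : ℕ, ∑' k : ℕ,
          (if 1 ≤ k ∧ 1 ≤ j ∧ 2 ≤ ((k : ℤ) - (j : ℤ)).natAbs then B k j else 0) :=
          ENNReal.tsum_comm
      _ = ∑' j : ℕ, ∫⁻ y in Ωl j, h y * ∫⁻ x in ⋃ k, SB j k, w x y := by
          refine tsum_congr fun j => ?_
          rw [tsum_congr (fun k => step1 k j), step2 j]
      _ ≤ ∑' j : ℕ, (if 1 ≤ j then ENNReal.ofReal (CB * R₀ ^ (α + β - σ))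
            * ∫⁻ y in Ωl j, h y else 0) := ENNReal.tsum_le_tsum step3
      _ ≤ ENNReal.ofReal (CB * R₀ ^ (α + β - σ)) * ∫⁻ x in Ω₀, h x := step4
  -- combine
  have hGint : Integrable (fun x => ‖G x‖) (volume.restrict Ω₀) :=
    ((hF.mono_set hΩ₀sub).congr hae0).norm
  have hlint : (∫⁻ x in Ω₀, h x) = ENNReal.ofReal (∫ x in Ω₀, ‖G x‖) := by
    simp only [hhdef]
    exact (ofReal_integral_eq_lintegral_ofReal hGint
      (Filter.Eventually.of_forall fun x => norm_nonneg _)).symm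
  have hintnn : 0 ≤ ∫ x in Ω₀, ‖G x‖ := integral_nonneg fun x => norm_nonneg _
  calc (∑' k : ℕ, ∑' j : ℕ,
        if 1 ≤ k ∧ 1 ≤ j ∧ 2 ≤ ((k : ℤ) - (j : ℤ)).natAbs then
          ∫⁻ x in Ωl k, ∫⁻ y in Ωl j,
            ENNReal.ofReal (d x ^ α * d y ^ β * (‖G x - G y‖ / ‖x - y‖ ^ ((n : ℝ) + σ)))
        else 0)
      ≤ (∑' k : ℕ, ∑' j : ℕ,
          ((if 1 ≤ k ∧ 1 ≤ j ∧ 2 ≤ ((k : ℤ) - (j : ℤ)).natAbs then A k j else 0)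
           + (if 1 ≤ k ∧ 1 ≤ j ∧ 2 ≤ ((k : ℤ) - (j : ℤ)).natAbs then B k j else 0))) := by
        refine ENNReal.tsum_le_tsum fun k => ENNReal.tsum_le_tsum fun j => ?_
        split_ifs with hc
        · exact hT_le k j
        · simp
    _ = (∑' k : ℕ, ∑' j : ℕ,
          (if 1 ≤ k ∧ 1 ≤ j ∧ 2 ≤ ((k : ℤ) - (j : ℤ)).natAbs then A k j else 0))
        + (∑' k : ℕ, ∑' j : ℕ,
          (if 1 ≤ k ∧ 1 ≤ j ∧ 2 ≤ ((k : ℤ) - (j : ℤ)).natAbs then B k j else 0)) := by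
        rw [← ENNReal.tsum_add]
        refine tsum_congr fun k => ?_
        rw [← ENNReal.tsum_add]
    _ ≤ (ENNReal.ofReal (CA * R₀ ^ (α + β - σ)) * ∫⁻ x in Ω₀, h x)
        + ENNReal.ofReal (CB * R₀ ^ (α + β - σ)) * ∫⁻ x in Ω₀, h x :=
        add_le_add hpartA hpartB
    _ = ENNReal.ofReal ((CA + CB) * R₀ ^ (α + β - σ) * ∫ x in Ω₀, ‖G x‖) := by
        rw [hlint, ← ENNReal.ofReal_mul (by positivity), ← ENNReal.ofReal_mul (by positivity),
          ← ENNReal.ofReal_add (by positivity) (by positivity)]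
        congr 1
        ring
end
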